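/- arXiv:cond-mat/0203166 — 6 statements merged into one kernel-verified Lean document; each statement's English description precedes it below -/
import Mathlib

section
/- Let (X,Y) be bivariate Gaussian with zero means, unit variances and correlation ρ ∈ (−1,1), and let A ⊆ ℝ with P(Y ∈ A) > 0. Then the conditional correlation coefficient of X and Y given Y ∈ A equals ρ / sqrt(ρ² + (1−ρ²)/Var(Y | Y ∈ A)). -/
open MeasureTheory ProbabilityTheory Filter Real Set

/-- Expectation of `f` conditioned on the event `A`. -/
noncomputable def cExp {Ω : Type*} [MeasurableSpace Ω] (μ : Measure Ω) (A : Set Ω)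
    (f : Ω → ℝ) : ℝ :=
  (∫ ω in A, f ω ∂μ) / (μ A).toReal

/-- Variance of `f` conditioned on the event `A`. -/
noncomputable def cVar {Ω : Type*} [MeasurableSpace Ω] (μ : Measure Ω) (A : Set Ω)
    (f : Ω → ℝ) : ℝ :=
  cExp μ A (fun ω => (f ω) ^ 2) - (cExp μ A f) ^ 2

/-- Covariance of `f` and `g` conditioned on the event `A`. -/
noncomputable def cCov {Ω : Type*} [MeasurableSpace Ω] (μ : Measure Ω) (A : Set Ω)
    (f g : Ω → ℝ) : ℝ :=
  cExp μ A (fun ω => f ω * g ω) - cExp μ A f * cExp μ A g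

/-- Correlation coefficient of `f` and `g` conditioned on the event `A`. -/
noncomputable def cCorr {Ω : Type*} [MeasurableSpace Ω] (μ : Measure Ω) (A : Set Ω)
    (f g : Ω → ℝ) : ℝ :=
  cCov μ A f g / Real.sqrt (cVar μ A f * cVar μ A g)

/-- The standard normal cumulative distribution function `Φ`. -/
noncomputable def stdPhi (x : ℝ) : ℝ := ((gaussianReal 0 1) (Set.Iic x)).toReal

/-- The standard normal density `φ`. -/
noncomputable def stdphi (x : ℝ) : ℝ := Real.exp (-x ^ 2 / 2) / Real.sqrt (2 * Real.pi)

open scoped NNReal ENNReal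

section AuxGauss

lemma pdf01 (x : ℝ) : gaussianPDFReal 0 1 x = (Real.sqrt (2 * π))⁻¹ * Real.exp (-(1/2) * x ^ 2) := by
  rw [gaussianPDFReal]
  norm_num
  ring_nf
  exact Or.inl trivial

lemma integral_gaussianReal01 (g : ℝ → ℝ) :
    ∫ x, g x ∂(gaussianReal 0 1) = ∫ x, gaussianPDFReal 0 1 x * g x := by
  rw [gaussianReal_of_var_ne_zero 0 one_ne_zero]
  have h : gaussianPDF 0 1 = fun x => ((gaussianPDFReal 0 1 x).toNNReal : ℝ≥0∞) := rfl
  rw [h, integral_withDensity_eq_integral_smul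
    ((measurable_gaussianPDFReal 0 1).real_toNNReal) g]
  congr 1; funext x
  rw [NNReal.smul_def, smul_eq_mul, Real.coe_toNNReal _ (gaussianPDFReal_nonneg 0 1 x)]

lemma int_exp_half : ∫ x : ℝ, Real.exp (-(1/2) * x ^ 2) = Real.sqrt (2 * π) := by
  rw [integral_gaussian]
  congr 1
  rw [div_div_eq_mul_div, div_one]
  ring

lemma int_odd_half : ∫ x : ℝ, x * Real.exp (-(1/2) * x ^ 2) = 0 := by
  set f : ℝ → ℝ := fun x => x * Real.exp (-(1/2) * x ^ 2) with hf
  have hemb : MeasurableEmbedding fun x : ℝ => -x :=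
    (Homeomorph.neg ℝ).isClosedEmbedding.measurableEmbedding
  have h1 : ∫ x, f x = ∫ x, f (-x) := by
    have := hemb.integral_map (μ := (volume : Measure ℝ)) f
    rw [Measure.map_neg_eq_self] at this
    exact this
  have h2 : ∀ x, f (-x) = - f x := by
    intro x; simp only [hf]; ring_nf
  have h3 : ∫ x, f x = - ∫ x, f x := by
    calc ∫ x, f x = ∫ x, f (-x) := h1
    _ = ∫ x, -f x := by simp_rw [h2]
    _ = -∫ x, f x := integral_neg f
  linarith

lemma int_sq_half : ∫ x : ℝ, x ^ 2 * Real.exp (-(1/2) * x ^ 2) = Real.sqrt (2 * π) := by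
  have hu : ∀ x : ℝ, HasDerivAt (fun x : ℝ => x) (1 : ℝ) x := fun x => hasDerivAt_id x
  have hv : ∀ x : ℝ, HasDerivAt (fun x : ℝ => -Real.exp (-(1/2) * x ^ 2))
      (x * Real.exp (-(1/2) * x ^ 2)) x := by
    intro x
    have h1 : HasDerivAt (fun x : ℝ => -(1/2) * x ^ 2) (-(1/2) * (2 * x)) x := by
      simpa using ((hasDerivAt_pow 2 x).const_mul (-(1/2) : ℝ))
    have := (h1.exp).fun_neg
    exact this.congr_deriv (by ring)
  have hsq : Integrable (fun x : ℝ => x ^ 2 * Real.exp (-(1/2) * x ^ 2)) := by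
    have := integrable_rpow_mul_exp_neg_mul_sq (b := 1/2) (by norm_num) (s := 2) (by norm_num)
    refine this.congr (ae_of_all _ fun x => ?_)
    norm_num [show ((2:ℝ)) = ((2:ℕ):ℝ) by norm_num, Real.rpow_natCast]
  have hmul : Integrable (fun x : ℝ => x * Real.exp (-(1/2) * x ^ 2)) :=
    integrable_mul_exp_neg_mul_sq (b := 1/2) (by norm_num)
  have hexp : Integrable (fun x : ℝ => Real.exp (-(1/2) * x ^ 2)) :=
    integrable_exp_neg_mul_sq (b := 1/2) (by norm_num)
  have key := integral_mul_deriv_eq_deriv_mul_of_integrable (fun x _ => hu x) (fun x _ => hv x)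
    (hsq.congr (ae_of_all _ fun x => by simp only [Pi.mul_def, Pi.neg_apply]; ring))
    (hexp.neg.congr (ae_of_all _ fun x => by simp only [Pi.mul_def, Pi.neg_apply]; ring))
    (hmul.neg.congr (ae_of_all _ fun x => by simp only [Pi.mul_def, Pi.neg_apply]; ring))
  have e1 : ∫ x : ℝ, x * (x * Real.exp (-(1/2) * x ^ 2)) = ∫ x : ℝ, x ^ 2 * Real.exp (-(1/2) * x ^ 2) := by
    congr 1; funext x; ring
  have e2 : ∫ x : ℝ, (1 : ℝ) * (-Real.exp (-(1/2) * x ^ 2)) = - ∫ x : ℝ, Real.exp (-(1/2) * x ^ 2) := by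
    rw [← integral_neg]; congr 1; funext x; ring
  rw [e1] at key
  rw [key, e2, int_exp_half]
  ring


lemma sqrt2pi_pos : 0 < Real.sqrt (2 * π) := Real.sqrt_pos.mpr (by positivity)

lemma gauss_integrable (g : ℝ → ℝ) (hg : Measurable g)
    (h : Integrable (fun x => g x * Real.exp (-(1/2) * x ^ 2))) :
    Integrable g (gaussianReal 0 1) := by
  rw [gaussianReal_of_var_ne_zero 0 one_ne_zero]
  rw [integrable_withDensity_iff (measurable_gaussianPDF 0 1)
    (ae_of_all _ fun x => ENNReal.ofReal_lt_top)]
  have : (fun x => g x * (gaussianPDF 0 1 x).toReal)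
      = fun x => (Real.sqrt (2 * π))⁻¹ * (g x * Real.exp (-(1/2) * x ^ 2)) := by
    funext x
    rw [gaussianPDF, ENNReal.toReal_ofReal (gaussianPDFReal_nonneg 0 1 x), pdf01]
    ring
  rw [this]
  exact h.const_mul _

lemma gauss_int_id : Integrable (fun x : ℝ => x) (gaussianReal 0 1) :=
  gauss_integrable _ measurable_id (integrable_mul_exp_neg_mul_sq (b := 1/2) (by norm_num))

lemma gauss_int_sq : Integrable (fun x : ℝ => x ^ 2) (gaussianReal 0 1) := by
  refine gauss_integrable _ (by fun_prop) ?_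
  have := integrable_rpow_mul_exp_neg_mul_sq (b := 1/2) (by norm_num) (s := 2) (by norm_num)
  refine this.congr (ae_of_all _ fun x => ?_)
  norm_num [show ((2:ℝ)) = ((2:ℕ):ℝ) by norm_num, Real.rpow_natCast]

lemma gauss_mean : ∫ x, x ∂(gaussianReal 0 1) = 0 := by
  rw [integral_gaussianReal01]
  have : (fun x => gaussianPDFReal 0 1 x * x)
      = fun x => (Real.sqrt (2 * π))⁻¹ * (x * Real.exp (-(1/2) * x ^ 2)) := by
    funext x; rw [pdf01]; ring
  rw [this, integral_const_mul, int_odd_half, mul_zero]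

lemma gauss_msq : ∫ x, x ^ 2 ∂(gaussianReal 0 1) = 1 := by
  rw [integral_gaussianReal01]
  have : (fun x => gaussianPDFReal 0 1 x * x ^ 2)
      = fun x => (Real.sqrt (2 * π))⁻¹ * (x ^ 2 * Real.exp (-(1/2) * x ^ 2)) := by
    funext x; rw [pdf01]; ring
  rw [this, integral_const_mul, int_sq_half, inv_mul_cancel₀ sqrt2pi_pos.ne']

end AuxGauss

theorem stmt4 {Ω : Type*} [MeasurableSpace Ω] (P : Measure Ω) [IsProbabilityMeasure P]
    (Y Z : Ω → ℝ) (hY : Measurable Y) (hZ : Measurable Z)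
    (hYlaw : Measure.map Y P = gaussianReal 0 1) (hZlaw : Measure.map Z P = gaussianReal 0 1)
    (hind : IndepFun Y Z P)
    (ρ : ℝ) (hρ : ρ ∈ Set.Ioo (-1 : ℝ) 1)
    (X : Ω → ℝ) (hX : X = fun ω => ρ * Y ω + Real.sqrt (1 - ρ ^ 2) * Z ω)
    (A : Set ℝ) (hA : MeasurableSet A) (hpos : 0 < P (Y ⁻¹' A)) :
    cCorr P (Y ⁻¹' A) X Y
      = ρ / Real.sqrt (ρ ^ 2 + (1 - ρ ^ 2) / cVar P (Y ⁻¹' A) Y) := by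
  set S := Y ⁻¹' A with hSdef
  have hS : MeasurableSet S := hY hA
  set s := Real.sqrt (1 - ρ ^ 2) with hs
  have hs2 : s ^ 2 = 1 - ρ ^ 2 := Real.sq_sqrt (by nlinarith [hρ.1, hρ.2])
  clear_value s
  have hPSGA : P S = gaussianReal 0 1 A := by
    rw [← hYlaw]; exact (Measure.map_apply hY hA).symm
  have hppos : 0 < (P S).toReal := ENNReal.toReal_pos hpos.ne' (measure_ne_top P S)
  -- key independence computation
  have key : ∀ f g : ℝ → ℝ, Measurable f → Measurable g →
      ∫ ω in S, f (Y ω) * g (Z ω) ∂P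
        = (∫ x in A, f x ∂(gaussianReal 0 1)) * ∫ x, g x ∂(gaussianReal 0 1) := by
    intro f g hf hg
    rw [← integral_indicator hS]
    have hind2 : IndepFun (fun ω => A.indicator f (Y ω)) (fun ω => g (Z ω)) P :=
      hind.comp (hf.indicator hA) hg
    have heq : S.indicator (fun ω => f (Y ω) * g (Z ω))
        = fun ω => A.indicator f (Y ω) * g (Z ω) := by
      funext ω
      by_cases h : Y ω ∈ A
      · rw [Set.indicator_of_mem (show ω ∈ S from h), Set.indicator_of_mem h]
      · rw [Set.indicator_of_notMem (show ω ∉ S from h), Set.indicator_of_notMem h, zero_mul]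
    rw [heq, hind2.integral_fun_mul_eq_mul_integral ((hf.indicator hA).comp hY).aestronglyMeasurable
        (hg.comp hZ).aestronglyMeasurable]
    congr 1
    · rw [← integral_indicator hA, ← hYlaw,
        integral_map hY.aemeasurable (hf.indicator hA).aestronglyMeasurable]
    · rw [← hZlaw, integral_map hZ.aemeasurable hg.aestronglyMeasurable]
  -- basic set integrals
  have IY : ∫ ω in S, Y ω ∂P = ∫ x in A, x ∂(gaussianReal 0 1) := by
    have := key (fun x => x) (fun _ => (1 : ℝ)) measurable_id measurable_const
    simpa using this
  have IY2 : ∫ ω in S, Y ω ^ 2 ∂P = ∫ x in A, x ^ 2 ∂(gaussianReal 0 1) := by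
    have := key (fun x => x ^ 2) (fun _ => (1 : ℝ)) (by fun_prop) measurable_const
    simpa using this
  have IZ : ∫ ω in S, Z ω ∂P = 0 := by
    have := key (fun _ => (1 : ℝ)) (fun x => x) measurable_const measurable_id
    simpa [gauss_mean] using this
  have IZ2 : ∫ ω in S, Z ω ^ 2 ∂P = (P S).toReal := by
    have := key (fun _ => (1 : ℝ)) (fun x => x ^ 2) measurable_const (by fun_prop)
    simpa [gauss_msq, measureReal_def, ← hPSGA] using this
  have IYZ : ∫ ω in S, Y ω * Z ω ∂P = 0 := by
    have := key (fun x => x) (fun x => x) measurable_id measurable_id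
    simpa [gauss_mean] using this
  -- integrability
  have iY : Integrable Y P := by
    have h := (hYlaw ▸ gauss_int_id : Integrable (fun x : ℝ => x) (Measure.map Y P))
    simpa [Function.comp] using
      (integrable_map_measure measurable_id.aestronglyMeasurable hY.aemeasurable).mp h
  have iZ : Integrable Z P := by
    have h := (hZlaw ▸ gauss_int_id : Integrable (fun x : ℝ => x) (Measure.map Z P))
    simpa [Function.comp] using
      (integrable_map_measure measurable_id.aestronglyMeasurable hZ.aemeasurable).mp h
  have iY2 : Integrable (fun ω => Y ω ^ 2) P := by
    have h := (hYlaw ▸ gauss_int_sq : Integrable (fun x : ℝ => x ^ 2) (Measure.map Y P))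
    simpa [Function.comp_def] using
      (integrable_map_measure (by fun_prop) hY.aemeasurable).mp h
  have iZ2 : Integrable (fun ω => Z ω ^ 2) P := by
    have h := (hZlaw ▸ gauss_int_sq : Integrable (fun x : ℝ => x ^ 2) (Measure.map Z P))
    simpa [Function.comp_def] using
      (integrable_map_measure (by fun_prop) hZ.aemeasurable).mp h
  have iYZ : Integrable (fun ω => Y ω * Z ω) P := hind.integrable_mul iY iZ
  have rY : Integrable Y (P.restrict S) := iY.restrict
  have rZ : Integrable Z (P.restrict S) := iZ.restrict
  have rY2 : Integrable (fun ω => Y ω ^ 2) (P.restrict S) := iY2.restrict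
  have rZ2 : Integrable (fun ω => Z ω ^ 2) (P.restrict S) := iZ2.restrict
  have rYZ : Integrable (fun ω => Y ω * Z ω) (P.restrict S) := iYZ.restrict
  -- integrals of X
  have IX : ∫ ω in S, X ω ∂P = ρ * ∫ x in A, x ∂(gaussianReal 0 1) := by
    have i1 : Integrable (fun ω => ρ * Y ω) (P.restrict S) := rY.const_mul ρ
    have i2 : Integrable (fun ω => s * Z ω) (P.restrict S) := rZ.const_mul s
    rw [hX, integral_add i1 i2, integral_const_mul, integral_const_mul, IY, IZ]
    ring
  have IXY : ∫ ω in S, X ω * Y ω ∂P = ρ * ∫ x in A, x ^ 2 ∂(gaussianReal 0 1) := by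
    have h : (fun ω => X ω * Y ω) = fun ω => ρ * Y ω ^ 2 + s * (Y ω * Z ω) := by
      funext ω; rw [hX]; ring
    have i1 : Integrable (fun ω => ρ * Y ω ^ 2) (P.restrict S) := rY2.const_mul ρ
    have i2 : Integrable (fun ω => s * (Y ω * Z ω)) (P.restrict S) := rYZ.const_mul s
    rw [h, integral_add i1 i2, integral_const_mul, integral_const_mul, IY2, IYZ]
    ring
  have IX2 : ∫ ω in S, X ω ^ 2 ∂P
      = ρ ^ 2 * (∫ x in A, x ^ 2 ∂(gaussianReal 0 1)) + s ^ 2 * (P S).toReal := by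
    have h : (fun ω => X ω ^ 2)
        = fun ω => (ρ ^ 2 * Y ω ^ 2 + (2 * ρ * s) * (Y ω * Z ω)) + s ^ 2 * Z ω ^ 2 := by
      funext ω; rw [hX]; ring
    have i1 : Integrable (fun ω => ρ ^ 2 * Y ω ^ 2) (P.restrict S) := rY2.const_mul _
    have i2 : Integrable (fun ω => (2 * ρ * s) * (Y ω * Z ω)) (P.restrict S) := rYZ.const_mul _
    have i12 : Integrable (fun ω => ρ ^ 2 * Y ω ^ 2 + (2 * ρ * s) * (Y ω * Z ω))
        (P.restrict S) := i1.add i2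
    have i3 : Integrable (fun ω => s ^ 2 * Z ω ^ 2) (P.restrict S) := rZ2.const_mul _
    rw [h, integral_add i12 i3, integral_add i1 i2, integral_const_mul, integral_const_mul,
      integral_const_mul, IY2, IYZ, IZ2]
    ring
  -- abbreviate
  set a1 := ∫ x in A, x ∂(gaussianReal 0 1) with ha1
  clear_value a1
  set a2 := ∫ x in A, x ^ 2 ∂(gaussianReal 0 1) with ha2
  clear_value a2
  set p := (P S).toReal with hp
  clear_value p
  -- conditional variance
  set m := a1 / p with hm
  clear_value m
  have hvval : cVar P S Y = a2 / p - (a1 / p) ^ 2 := by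
    rw [cVar, cExp, cExp, IY, IY2, ← hp]
  set v := cVar P S Y with hv
  clear_value v
  have hIone : ∫ _ω in S, (1 : ℝ) ∂P = p := by
    rw [setIntegral_const, smul_eq_mul, mul_one, measureReal_def, ← hp]
  have hvar_int : ∫ ω in S, (Y ω - m) ^ 2 ∂P = p * v := by
    have h : (fun ω => (Y ω - m) ^ 2)
        = fun ω => (Y ω ^ 2 + (-(2 * m)) * Y ω) + m ^ 2 := by
      funext ω; ring
    have i1 : Integrable (fun ω => (-(2 * m)) * Y ω) (P.restrict S) := rY.const_mul _
    have i2 : Integrable (fun ω => Y ω ^ 2 + (-(2 * m)) * Y ω) (P.restrict S) := rY2.add i1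
    rw [h, integral_add i2 (integrable_const _), integral_add rY2 i1, integral_const_mul,
      IY, IY2, integral_const]
    simp only [measureReal_def, Measure.restrict_apply_univ, smul_eq_mul, mul_one, ← hp]
    rw [hvval, hm]
    field_simp
    ring
  have hvpos : 0 < v := by
    have hnonneg : 0 ≤ ∫ ω in S, (Y ω - m) ^ 2 ∂P :=
      integral_nonneg fun ω => sq_nonneg _
    have hvge : 0 ≤ v := by nlinarith [hvar_int]
    rcases hvge.lt_or_eq with h | h
    · exact h
    · exfalso
      have hzero : ∫ ω in S, (Y ω - m) ^ 2 ∂P = 0 := by rw [hvar_int, ← h, mul_zero]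
      have hint : Integrable (fun ω => (Y ω - m) ^ 2) (P.restrict S) := by
        have h' : (fun ω => (Y ω - m) ^ 2)
            = fun ω => (Y ω ^ 2 + (-(2 * m)) * Y ω) + m ^ 2 := by funext ω; ring
        rw [h']
        exact (rY2.add (rY.const_mul _)).add (integrable_const _)
      have hae : (fun ω => (Y ω - m) ^ 2) =ᵐ[P.restrict S] 0 :=
        (integral_eq_zero_iff_of_nonneg (fun ω => sq_nonneg _) hint).mp hzero
      have hYm : ∀ᵐ ω ∂P.restrict S, Y ω = m := by
        filter_upwards [hae] with ω hω
        have h0 : (Y ω - m) ^ 2 = 0 := hω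
        have := sq_eq_zero_iff.mp h0
        linarith
      have h2 := (ae_restrict_iff' hS).mp hYm
      rw [ae_iff] at h2
      have h3 : P (S ∩ {ω | Y ω ≠ m}) = 0 := by
        refine measure_mono_null ?_ h2
        intro ω hω
        simp only [Set.mem_setOf_eq, not_forall]
        exact ⟨hω.1, hω.2⟩
      have h4 : P (Y ⁻¹' {m}) = 0 := by
        rw [← Measure.map_apply hY (measurableSet_singleton m), hYlaw]
        exact (gaussianReal_absolutelyContinuous 0 one_ne_zero) (measure_singleton m)
      have h5 : S ⊆ (S ∩ {ω | Y ω ≠ m}) ∪ Y ⁻¹' {m} := by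
        intro ω hω
        by_cases hc : Y ω = m
        · exact Or.inr hc
        · exact Or.inl ⟨hω, hc⟩
      have hle : P S ≤ P (S ∩ {ω | Y ω ≠ m}) + P (Y ⁻¹' {m}) :=
        (measure_mono h5).trans (measure_union_le _ _)
      rw [h3, h4, add_zero] at hle
      exact absurd (le_antisymm hle (by simp)) hpos.ne'
  -- final algebra
  have hcY : cExp P S Y = a1 / p := by rw [cExp, IY, ← hp]
  have hcX : cExp P S X = ρ * a1 / p := by rw [cExp, IX, ← hp]
  have hcXY : cExp P S (fun ω => X ω * Y ω) = ρ * a2 / p := by rw [cExp, IXY, ← hp]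
  have hcX2 : cExp P S (fun ω => X ω ^ 2) = (ρ ^ 2 * a2 + s ^ 2 * p) / p := by
    rw [cExp, IX2, ← hp]
  have hcov : cCov P S X Y = ρ * v := by
    rw [cCov, hcXY, hcX, hcY, hvval]
    field_simp
  have hvarX : cVar P S X = ρ ^ 2 * v + s ^ 2 := by
    rw [cVar, hcX2, hcX, hvval]
    field_simp
    ring
  rw [cCorr, hcov, hvarX, ← hv, ← hs2]
  have harg : (ρ ^ 2 * v + s ^ 2) * v = v ^ 2 * (ρ ^ 2 + s ^ 2 / v) := by
    field_simp
  rw [harg, Real.sqrt_mul (sq_nonneg v), Real.sqrt_sq hvpos.le]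
  rw [mul_comm ρ v, mul_div_mul_left _ _ hvpos.ne']
end

section
/- For a bivariate Gaussian pair (X,Y) with zero means, unit variances and correlation ρ ∈ (0,1), the correlation of X and Y conditioned on |Y| > v tends to 1 as v → ∞, with 1 − ρ_v^s ~ ((1−ρ²)/(2ρ²))·(1/v²). -/
open MeasureTheory ProbabilityTheory Filter Real Set
open scoped ENNReal NNReal

lemma stdphi_pos (x : ℝ) : 0 < stdphi x := by
  apply div_pos (Real.exp_pos _)
  exact Real.sqrt_pos.2 (by positivity)

lemma stdphi_eq_gaussian (x : ℝ) : gaussianPDFReal 0 1 x = stdphi x := by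
  simp [gaussianPDFReal, stdphi]
  rw [inv_eq_one_div, div_mul_eq_mul_div, one_mul]
  ring_nf

lemma continuous_stdphi : Continuous stdphi := by
  unfold stdphi
  fun_prop

lemma hasDerivAt_stdphi (x : ℝ) : HasDerivAt stdphi (-(x * stdphi x)) x := by
  have h1 : HasDerivAt (fun x : ℝ => -x ^ 2 / 2) (-x) x := by
    have this : HasDerivAt (_ : ℝ → ℝ) _ x := ((hasDerivAt_pow 2 x).neg).div_const 2
    convert this using 1
    simp
    ring
  have h2 : HasDerivAt (fun x : ℝ => Real.exp (-x ^ 2 / 2)) (Real.exp (-x ^ 2 / 2) * (-x)) x :=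
    (Real.hasDerivAt_exp _).comp x h1
  have h3 := h2.div_const (Real.sqrt (2 * Real.pi))
  refine h3.congr_deriv ?_
  unfold stdphi
  ring

lemma integrable_pow_stdphi (n : ℕ) : Integrable (fun x => x ^ n * stdphi x) := by
  have h := integrable_rpow_mul_exp_neg_mul_sq (b := (1:ℝ)/2) (by norm_num) (s := (n:ℝ))
    (lt_of_lt_of_le neg_one_lt_zero (Nat.cast_nonneg n))
  have h3 : Integrable (fun x : ℝ => x ^ n * Real.exp (-x ^ 2 / 2)) := by
    apply h.congr
    filter_upwards with x
    rw [Real.rpow_natCast]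
    congr 1
    ring_nf
  have := h3.div_const (Real.sqrt (2 * Real.pi))
  apply this.congr
  filter_upwards with x
  unfold stdphi
  ring

lemma tendsto_pow_stdphi_atTop (n : ℕ) :
    Tendsto (fun x => x ^ n * stdphi x) atTop (nhds 0) := by
  have hbase : Tendsto (fun x : ℝ => x ^ n * Real.exp (-x)) atTop (nhds 0) :=
    tendsto_pow_mul_exp_neg_atTop_nhds_zero n
  have hsq : Tendsto (fun x : ℝ => x ^ n * Real.exp (-x ^ 2 / 2)) atTop (nhds 0) := by
    apply squeeze_zero' (g := fun x : ℝ => x ^ n * Real.exp (-x))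
    · filter_upwards [eventually_ge_atTop (0:ℝ)] with x hx
      positivity
    · filter_upwards [eventually_ge_atTop (2:ℝ)] with x hx
      have hx0 : (0:ℝ) ≤ x := by linarith
      apply mul_le_mul_of_nonneg_left _ (by positivity)
      apply Real.exp_le_exp.2
      nlinarith
    · exact hbase
  have := hsq.div_const (Real.sqrt (2 * Real.pi))
  simpa [stdphi, mul_div_assoc] using this

noncomputable def Gt (v : ℝ) : ℝ := ∫ x in Ioi v, stdphi x
noncomputable def Jt (v : ℝ) : ℝ := ∫ x in Ioi v, x ^ 2 * stdphi x

lemma integrable_stdphi : Integrable stdphi := by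
  have := integrable_pow_stdphi 0
  simpa using this

lemma tendsto_stdphi_atTop : Tendsto stdphi atTop (nhds 0) := by
  have := tendsto_pow_stdphi_atTop 0
  simpa using this

lemma Gt_pos (v : ℝ) : 0 < Gt v := by
  rw [Gt, setIntegral_pos_iff_support_of_nonneg_ae]
  · have : Function.support stdphi = univ := by
      ext x; simp [Function.mem_support, (stdphi_pos x).ne']
    rw [this, univ_inter]
    simp
  · filter_upwards with x using (stdphi_pos x).le
  · exact integrable_stdphi.integrableOn

lemma integral_id_mul_stdphi_Ioi (v : ℝ) : ∫ x in Ioi v, x * stdphi x = stdphi v := by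
  have h : ∫ x in Ioi v, x * stdphi x = 0 - (-stdphi v) := by
    apply integral_Ioi_of_hasDerivAt_of_tendsto' (f := fun x => -stdphi x)
    · intro x _
      exact (hasDerivAt_stdphi x).neg.congr_deriv (by simp)
    · have := (integrable_pow_stdphi 1).integrableOn (s := Ioi v)
      simpa using this
    · simpa using tendsto_stdphi_atTop.neg
  simpa using h

lemma Jt_eq (v : ℝ) : Jt v = v * stdphi v + Gt v := by
  have h : ∫ x in Ioi v, (x ^ 2 * stdphi x - stdphi x) = 0 - (-(v * stdphi v)) := by
    apply integral_Ioi_of_hasDerivAt_of_tendsto' (f := fun x => -(x * stdphi x))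
    · intro x _
      have := ((hasDerivAt_id x).mul (hasDerivAt_stdphi x)).neg
      refine this.congr_deriv ?_
      simp only [id_eq]
      ring
    · exact ((integrable_pow_stdphi 2).sub integrable_stdphi).integrableOn
    · simpa using (tendsto_pow_stdphi_atTop 1).neg
  rw [integral_sub ((integrable_pow_stdphi 2).integrableOn) integrable_stdphi.integrableOn] at h
  have : Jt v - Gt v = v * stdphi v := by simpa [Jt, Gt] using h
  linarith

lemma Jt_ge (v : ℝ) (hv : 0 ≤ v) : v ^ 2 * Gt v ≤ Jt v := by
  rw [Gt, ← integral_const_mul]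
  apply setIntegral_mono_on
  · exact (integrable_stdphi.integrableOn).const_mul _
  · exact (integrable_pow_stdphi 2).integrableOn
  · exact measurableSet_Ioi
  · intro x hx
    have hx' : v ≤ x := le_of_lt hx
    have : v ^ 2 ≤ x ^ 2 := by nlinarith
    exact mul_le_mul_of_nonneg_right this (stdphi_pos x).le

lemma mills_lower (v : ℝ) (hv : 1 ≤ v) : (v⁻¹ - v⁻¹ ^ 3) * stdphi v ≤ Gt v := by
  have hint : IntegrableOn (fun x => (1 - 3 * x⁻¹ ^ 4) * stdphi x) (Ioi v) := by
    apply Integrable.mono' ((integrable_stdphi.integrableOn).const_mul (4:ℝ))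
    · apply ContinuousOn.aestronglyMeasurable ?_ measurableSet_Ioi
      apply ContinuousOn.mul ?_ continuous_stdphi.continuousOn
      apply ContinuousOn.sub continuousOn_const
      apply ContinuousOn.mul continuousOn_const
      apply ContinuousOn.pow
      apply ContinuousOn.inv₀ continuousOn_id
      intro x hx
      exact ne_of_gt (lt_of_lt_of_le (lt_of_lt_of_le one_pos hv) (le_of_lt hx))
    · rw [ae_restrict_iff' measurableSet_Ioi]
      filter_upwards with x hx
      have hx1 : (1:ℝ) ≤ x := le_trans hv (le_of_lt hx)
      have hφ := stdphi_pos x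
      rw [Real.norm_eq_abs, abs_mul, abs_of_nonneg hφ.le]
      have h4' : x⁻¹ ^ 4 ≤ 1 := by
        apply pow_le_one₀ (by positivity)
        exact inv_le_one_of_one_le₀ hx1
      have h4 : (0:ℝ) ≤ x⁻¹ ^ 4 := by positivity
      have habs : |1 - 3 * x⁻¹ ^ 4| ≤ 4 := by
        rw [abs_le]; constructor <;> nlinarith
      nlinarith [mul_le_mul_of_nonneg_right habs hφ.le]
  have key : ∫ x in Ioi v, (1 - 3 * x⁻¹ ^ 4) * stdphi x
      = 0 - (-((v⁻¹ - v⁻¹ ^ 3) * stdphi v)) := by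
    apply integral_Ioi_of_hasDerivAt_of_tendsto'
      (f := fun x => -((x⁻¹ - x⁻¹ ^ 3) * stdphi x))
    · intro x hx
      have hx0 : x ≠ 0 := by
        have : (1:ℝ) ≤ x := le_trans hv hx
        linarith
      have h1 : HasDerivAt (fun x : ℝ => x⁻¹ - x⁻¹ ^ 3) (-(x ^ 2)⁻¹ + 3 * (x ^ 4)⁻¹) x := by
        have ha : HasDerivAt (fun x : ℝ => x⁻¹) (-(x ^ 2)⁻¹) x := by
          simpa using hasDerivAt_inv hx0
        have hb : HasDerivAt (fun x : ℝ => (x ^ 3)⁻¹) (-3 * (x ^ 4)⁻¹) x := by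
          have this : HasDerivAt (_ : ℝ → ℝ) _ x := hasDerivAt_zpow (-3) x (Or.inl hx0)
          convert this using 1
          norm_num [zpow_neg]
          norm_cast
        have this : HasDerivAt (_ : ℝ → ℝ) _ x := ha.sub hb
        convert this using 1
        · funext y
          rw [inv_pow]
          rfl
        · ring
      have := (h1.mul (hasDerivAt_stdphi x)).neg
      refine this.congr_deriv ?_
      have hx2 : x ≠ 0 := hx0
      field_simp
      ring
    · exact hint
    · have h1 : Tendsto (fun x : ℝ => x⁻¹ - x⁻¹ ^ 3) atTop (nhds 0) := by
        have ha : Tendsto (fun x : ℝ => x⁻¹) atTop (nhds 0) := tendsto_inv_atTop_zero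
        have := ha.sub (ha.pow 3)
        simpa using this
      have := (h1.mul tendsto_stdphi_atTop).neg
      simpa using this
  have hle : ∫ x in Ioi v, (1 - 3 * x⁻¹ ^ 4) * stdphi x ≤ Gt v := by
    rw [Gt]
    apply setIntegral_mono_on hint integrable_stdphi.integrableOn measurableSet_Ioi
    intro x hx
    have hφ := stdphi_pos x
    have h4 : (0:ℝ) ≤ x⁻¹ ^ 4 := by positivity
    nlinarith
  rw [key] at hle
  linarith [hle]

lemma m_lower (v : ℝ) (hv : 0 ≤ v) : v ^ 2 ≤ Jt v / Gt v :=
  (le_div_iff₀ (Gt_pos v)).2 (Jt_ge v hv)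

lemma m_upper (v : ℝ) (hv : 2 ≤ v) : Jt v / Gt v ≤ 1 + v ^ 4 / (v ^ 2 - 1) := by
  have hv1 : (1:ℝ) ≤ v := by linarith
  have hG := Gt_pos v
  have hφ := stdphi_pos v
  have hml := mills_lower v hv1
  have hc : (0:ℝ) < v⁻¹ - v⁻¹ ^ 3 := by
    have h1 : v⁻¹ ^ 3 < v⁻¹ := by
      have hvi : v⁻¹ < 1 := by
        rw [inv_lt_one_iff₀]; right; linarith
      have hvi0 : 0 < v⁻¹ := by positivity
      have hsq : v⁻¹ ^ 2 < 1 := pow_lt_one₀ hvi0.le hvi two_ne_zero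
      nlinarith
    linarith
  have key : v * stdphi v / Gt v ≤ v ^ 4 / (v ^ 2 - 1) := by
    have h1 : v * stdphi v / Gt v ≤ v * stdphi v / ((v⁻¹ - v⁻¹ ^ 3) * stdphi v) := by
      apply div_le_div_of_nonneg_left (by positivity) (by positivity) hml
    have h2 : v * stdphi v / ((v⁻¹ - v⁻¹ ^ 3) * stdphi v) = v ^ 4 / (v ^ 2 - 1) := by
      rw [div_eq_div_iff (by positivity) (by nlinarith)]
      field_simp
    linarith
  rw [Jt_eq, add_div, div_self hG.ne']
  linarith [key]

lemma tendsto_sq_atTop : Tendsto (fun v : ℝ => v ^ 2) atTop atTop :=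
  tendsto_pow_atTop two_ne_zero

lemma tendsto_inv_sq : Tendsto (fun v : ℝ => (v ^ 2)⁻¹) atTop (nhds 0) :=
  tendsto_sq_atTop.inv_tendsto_atTop

lemma tendsto_upper : Tendsto (fun v : ℝ => (v ^ 2)⁻¹ + v ^ 2 / (v ^ 2 - 1)) atTop (nhds 1) := by
  have h3 : Tendsto (fun v : ℝ => (v ^ 2 - 1)⁻¹) atTop (nhds 0) :=
    (tendsto_atTop_add_const_right _ (-1) tendsto_sq_atTop).inv_tendsto_atTop
  have h4 : Tendsto (fun v : ℝ => (1:ℝ) + (v ^ 2 - 1)⁻¹) atTop (nhds (1 + 0)) :=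
    tendsto_const_nhds.add h3
  have h2 : Tendsto (fun v : ℝ => v ^ 2 / (v ^ 2 - 1)) atTop (nhds 1) := by
    apply Tendsto.congr' ?_ (by simpa using h4)
    filter_upwards [eventually_ge_atTop (2:ℝ)] with v hv
    have h0 : v ^ 2 - 1 ≠ 0 := by nlinarith
    field_simp
    ring
  have := tendsto_inv_sq.add h2
  simpa using this

lemma tendsto_m_div_sq : Tendsto (fun v => Jt v / Gt v / v ^ 2) atTop (nhds 1) := by
  apply tendsto_of_tendsto_of_tendsto_of_le_of_le' (g := fun _ : ℝ => (1:ℝ))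
    (h := fun v : ℝ => (v ^ 2)⁻¹ + v ^ 2 / (v ^ 2 - 1)) tendsto_const_nhds tendsto_upper
  · filter_upwards [eventually_ge_atTop (2:ℝ)] with v hv
    have h := m_lower v (by linarith)
    rw [le_div_iff₀ (by positivity : (0:ℝ) < v ^ 2)]
    linarith
  · filter_upwards [eventually_ge_atTop (2:ℝ)] with v hv
    have h := m_upper v hv
    rw [div_le_iff₀ (by positivity : (0:ℝ) < v ^ 2)]
    have hd : (0:ℝ) < v ^ 2 - 1 := by nlinarith
    have heq : ((v ^ 2)⁻¹ + v ^ 2 / (v ^ 2 - 1)) * v ^ 2 = 1 + v ^ 2 * v ^ 2 / (v ^ 2 - 1) := by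
      field_simp
    have h44 : v ^ 2 * v ^ 2 / (v ^ 2 - 1) = v ^ 4 / (v ^ 2 - 1) := by ring_nf
    linarith

lemma tendsto_m_atTop : Tendsto (fun v => Jt v / Gt v) atTop atTop := by
  apply tendsto_atTop_mono' atTop (f₁ := fun v : ℝ => v ^ 2)
  · filter_upwards [eventually_ge_atTop (0:ℝ)] with v hv using m_lower v hv
  · exact tendsto_pow_atTop two_ne_zero

noncomputable def corrF (ρ v : ℝ) : ℝ :=
  ρ * Real.sqrt (Jt v / Gt v) / Real.sqrt (ρ ^ 2 * (Jt v / Gt v) + (1 - ρ ^ 2))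

lemma corrF_eq {ρ : ℝ} (hρ0 : 0 < ρ) {v : ℝ} (hv : 2 ≤ v) :
    corrF ρ v = ρ / Real.sqrt (ρ ^ 2 + (1 - ρ ^ 2) / (Jt v / Gt v)) := by
  have hmv : (4:ℝ) ≤ Jt v / Gt v := by
    have := m_lower v (by linarith)
    nlinarith
  set m := Jt v / Gt v with hm
  have hD : (0:ℝ) < ρ ^ 2 * m + (1 - ρ ^ 2) := by
    nlinarith [mul_nonneg (sq_nonneg ρ) (by linarith : (0:ℝ) ≤ m - 1)]
  have h1 : ρ ^ 2 + (1 - ρ ^ 2) / m = (ρ ^ 2 * m + (1 - ρ ^ 2)) / m := by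
    field_simp
  rw [corrF, h1, Real.sqrt_div hD.le, div_div_eq_mul_div]

lemma tendsto_corrF {ρ : ℝ} (hρ : ρ ∈ Set.Ioo (0:ℝ) 1) :
    Tendsto (fun v => corrF ρ v) atTop (nhds 1) := by
  obtain ⟨hρ0, hρ1⟩ := hρ
  have h0 : Tendsto (fun v => (1 - ρ ^ 2) / (Jt v / Gt v)) atTop (nhds 0) :=
    Tendsto.div_atTop tendsto_const_nhds tendsto_m_atTop
  have h1 : Tendsto (fun v => ρ / Real.sqrt (ρ ^ 2 + (1 - ρ ^ 2) / (Jt v / Gt v)))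
      atTop (nhds (ρ / Real.sqrt (ρ ^ 2 + 0))) := by
    apply Tendsto.div tendsto_const_nhds (tendsto_const_nhds.add h0).sqrt
    rw [add_zero, Real.sqrt_sq hρ0.le]
    exact hρ0.ne'
  rw [add_zero, Real.sqrt_sq hρ0.le, div_self hρ0.ne'] at h1
  apply Tendsto.congr' ?_ h1
  filter_upwards [eventually_ge_atTop (2:ℝ)] with v hv
  exact (corrF_eq hρ0 hv).symm

lemma tendsto_sq_mul_one_sub_corrF {ρ : ℝ} (hρ : ρ ∈ Set.Ioo (0:ℝ) 1) :
    Tendsto (fun v => v ^ 2 * (1 - corrF ρ v)) atTop (nhds ((1 - ρ ^ 2) / (2 * ρ ^ 2))) := by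
  obtain ⟨hρ0, hρ1⟩ := hρ
  set u : ℝ → ℝ := fun v => Jt v / Gt v / v ^ 2 with hu_def
  set w : ℝ → ℝ := fun v => ρ ^ 2 * u v + (1 - ρ ^ 2) * (v ^ 2)⁻¹ with hw_def
  have hu : Tendsto u atTop (nhds 1) := tendsto_m_div_sq
  have hw : Tendsto w atTop (nhds (ρ ^ 2)) := by
    have := (hu.const_mul (ρ ^ 2)).add (tendsto_inv_sq.const_mul (1 - ρ ^ 2))
    simpa using this
  have hden : Tendsto (fun v => w v + ρ * Real.sqrt (w v) * Real.sqrt (u v)) atTop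
      (nhds (ρ ^ 2 + ρ * Real.sqrt (ρ ^ 2) * Real.sqrt 1)) :=
    hw.add ((tendsto_const_nhds.mul hw.sqrt).mul hu.sqrt)
  rw [Real.sqrt_one, Real.sqrt_sq hρ0.le] at hden
  have hlim : Tendsto (fun v => (1 - ρ ^ 2) / (w v + ρ * Real.sqrt (w v) * Real.sqrt (u v)))
      atTop (nhds ((1 - ρ ^ 2) / (ρ ^ 2 + ρ * ρ * 1))) :=
    tendsto_const_nhds.div hden (ne_of_gt (by nlinarith))
  have heq : (1 - ρ ^ 2) / (ρ ^ 2 + ρ * ρ * 1) = (1 - ρ ^ 2) / (2 * ρ ^ 2) := by ring_nf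
  rw [heq] at hlim
  apply Tendsto.congr' ?_ hlim
  filter_upwards [eventually_ge_atTop (2:ℝ)] with v hv
  have hv0 : (0:ℝ) < v := by linarith
  have hmv : (0:ℝ) < Jt v / Gt v := by
    have := m_lower v (by linarith)
    nlinarith
  have hu0 : 0 < u v := by
    simp only [hu_def]
    positivity
  have hw0 : 0 < w v := by
    simp only [hw_def]
    have : 0 < (1 - ρ ^ 2) * (v ^ 2)⁻¹ := by
      apply mul_pos (by nlinarith) (by positivity)
    nlinarith [mul_pos (mul_pos hρ0 hρ0) hu0, sq_nonneg ρ]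
  set a := Real.sqrt (w v) with ha_def
  set b := Real.sqrt (u v) with hb_def
  have ha0 : 0 < a := Real.sqrt_pos.2 hw0
  have hb0 : 0 < b := Real.sqrt_pos.2 hu0
  have ha2 : a ^ 2 = w v := Real.sq_sqrt hw0.le
  have hb2 : b ^ 2 = u v := Real.sq_sqrt hu0.le
  -- express corrF in terms of a, b
  have hm' : Jt v / Gt v = u v * v ^ 2 :=
    (div_mul_cancel₀ _ (by positivity : (v:ℝ) ^ 2 ≠ 0)).symm
  have hsm : Real.sqrt (Jt v / Gt v) = b * v := by
    rw [hm', Real.sqrt_mul hu0.le, Real.sqrt_sq hv0.le]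
  have hD' : ρ ^ 2 * (Jt v / Gt v) + (1 - ρ ^ 2) = w v * v ^ 2 := by
    have hvne : (v:ℝ) ^ 2 ≠ 0 := by positivity
    simp only [hw_def]
    rw [add_mul, mul_assoc (1 - ρ ^ 2), inv_mul_cancel₀ hvne, mul_one, mul_assoc, ← hm']
  have hsD : Real.sqrt (ρ ^ 2 * (Jt v / Gt v) + (1 - ρ ^ 2)) = a * v := by
    rw [hD', Real.sqrt_mul hw0.le, Real.sqrt_sq hv0.le]
  have hc : corrF ρ v = ρ * b / a := by
    rw [corrF, hsm, hsD]
    field_simp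
  rw [hc]
  -- key identity
  have key : v ^ 2 * (a ^ 2 - ρ ^ 2 * b ^ 2) = 1 - ρ ^ 2 := by
    rw [ha2, hb2]
    simp only [hw_def]
    field_simp
    ring
  have hpos : 0 < w v + ρ * a * b := by positivity
  rw [div_eq_iff hpos.ne', ← ha2]
  field_simp
  ring_nf
  nlinarith [key, sq_nonneg a, sq_nonneg b]

noncomputable def gammaStd : Measure ℝ := gaussianReal 0 1

def Sv (v : ℝ) : Set ℝ := {y : ℝ | |y| > v}

lemma measurableSet_Sv (v : ℝ) : MeasurableSet (Sv v) := by
  have : Sv v = (fun y : ℝ => |y|) ⁻¹' (Ioi v) := rfl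
  rw [this]
  exact (measurable_abs) measurableSet_Ioi

lemma Sv_eq (v : ℝ) (hv : 0 ≤ v) : Sv v = Iio (-v) ∪ Ioi v := by
  ext y
  simp only [Sv, mem_setOf_eq, mem_union, mem_Iio, mem_Ioi, gt_iff_lt]
  rw [lt_abs]
  constructor
  · rintro (h | h)
    · right; exact h
    · left; linarith
  · rintro (h | h)
    · right; linarith
    · left; exact h

lemma gammaStd_eq : gammaStd = volume.withDensity fun x => ((stdphi x).toNNReal : ℝ≥0∞) := by
  rw [gammaStd, gaussianReal_of_var_ne_zero 0 one_ne_zero]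
  congr 1
  funext x
  rw [gaussianPDF, ENNReal.ofReal, stdphi_eq_gaussian]

lemma measurable_stdphi_nnreal : Measurable fun x => (stdphi x).toNNReal :=
  continuous_stdphi.measurable.real_toNNReal

lemma setIntegral_gammaStd (g : ℝ → ℝ) {s : Set ℝ} (hs : MeasurableSet s) :
    ∫ x in s, g x ∂gammaStd = ∫ x in s, stdphi x * g x := by
  rw [gammaStd_eq, setIntegral_withDensity_eq_setIntegral_smul measurable_stdphi_nnreal _ hs]
  apply setIntegral_congr_fun hs
  intro x _
  simp [NNReal.smul_def, Real.coe_toNNReal _ (stdphi_pos x).le]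

lemma integral_gammaStd (g : ℝ → ℝ) :
    ∫ x, g x ∂gammaStd = ∫ x, stdphi x * g x := by
  have := setIntegral_gammaStd g MeasurableSet.univ
  simpa using this

lemma integrable_gammaStd_iff (g : ℝ → ℝ) :
    Integrable g gammaStd ↔ Integrable (fun x => stdphi x * g x) := by
  rw [gammaStd_eq, integrable_withDensity_iff_integrable_smul measurable_stdphi_nnreal]
  constructor <;> intro h <;> apply h.congr <;> filter_upwards with x <;>
    simp [NNReal.smul_def, Real.coe_toNNReal _ (stdphi_pos x).le]

lemma integrable_pow_gammaStd (n : ℕ) : Integrable (fun x : ℝ => x ^ n) gammaStd := by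
  rw [integrable_gammaStd_iff]
  apply (integrable_pow_stdphi n).congr
  filter_upwards with x using mul_comm _ _

lemma integral_Iio_neg (f : ℝ → ℝ) (v : ℝ) :
    ∫ x in Iio (-v), f x = ∫ x in Ioi v, f (-x) := by
  rw [← integral_Iic_eq_integral_Iio, ← integral_comp_neg_Ioi]

lemma integral_univ_stdphi : ∫ x, stdphi x = 1 := by
  have := integral_gaussianPDFReal_eq_one 0 (v := 1) one_ne_zero
  rw [← this]
  congr 1
  funext x
  rw [stdphi_eq_gaussian]

lemma Gt_zero : Gt 0 = 1 / 2 := by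
  have hsplit : (∫ x in Iic (0:ℝ), stdphi x) + ∫ x in Ioi (0:ℝ), stdphi x = ∫ x, stdphi x :=
    intervalIntegral.integral_Iic_add_Ioi integrable_stdphi.integrableOn integrable_stdphi.integrableOn
  rw [integral_Iic_eq_integral_Iio] at hsplit
  have hsym : ∫ x in Iio (0:ℝ), stdphi x = ∫ x in Ioi (0:ℝ), stdphi x := by
    have := integral_Iio_neg stdphi 0
    simp only [neg_zero] at this
    rw [this]
    congr 1
    funext x
    simp [stdphi, neg_pow]
  rw [integral_univ_stdphi, hsym] at hsplit
  rw [Gt]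
  linarith

lemma disjoint_Iio_Ioi (v : ℝ) (hv : 0 ≤ v) : Disjoint (Iio (-v)) (Ioi v) := by
  apply Set.disjoint_left.2
  intro x hx hx'
  simp only [mem_Iio] at hx
  simp only [mem_Ioi] at hx'
  linarith

lemma setIntegral_Sv (f : ℝ → ℝ) (hf : Integrable f) (v : ℝ) (hv : 0 ≤ v) :
    ∫ x in Sv v, f x = (∫ x in Ioi v, f (-x)) + ∫ x in Ioi v, f x := by
  rw [Sv_eq v hv, setIntegral_union (disjoint_Iio_Ioi v hv) measurableSet_Ioi
    hf.integrableOn hf.integrableOn, integral_Iio_neg]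

lemma integral_split_all (f : ℝ → ℝ) (hf : Integrable f) :
    ∫ x, f x = (∫ x in Ioi (0:ℝ), f (-x)) + ∫ x in Ioi (0:ℝ), f x := by
  rw [← intervalIntegral.integral_Iic_add_Ioi hf.integrableOn hf.integrableOn (b := 0),
    integral_Iic_eq_integral_Iio]
  have := integral_Iio_neg f 0
  rw [neg_zero] at this
  rw [this]

lemma stdphi_neg (x : ℝ) : stdphi (-x) = stdphi x := by
  simp [stdphi]

lemma integrable_mul_pow_stdphi (n : ℕ) : Integrable (fun x => stdphi x * x ^ n) :=
  (integrable_pow_stdphi n).congr (by filter_upwards with x using mul_comm _ _)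

lemma toReal_gammaStd_Sv (v : ℝ) (hv : 0 ≤ v) : (gammaStd (Sv v)).toReal = 2 * Gt v := by
  rw [gammaStd, gaussianReal_apply_eq_integral 0 one_ne_zero]
  rw [ENNReal.toReal_ofReal (setIntegral_nonneg (measurableSet_Sv v)
    fun x _ => gaussianPDFReal_nonneg 0 1 x)]
  have h1 : ∫ x in Sv v, gaussianPDFReal 0 1 x = ∫ x in Sv v, stdphi x := by
    apply setIntegral_congr_fun (measurableSet_Sv v)
    intro x _
    exact stdphi_eq_gaussian x
  rw [h1, setIntegral_Sv stdphi integrable_stdphi v hv]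
  simp only [stdphi_neg]
  rw [Gt]
  ring

lemma integral_sq_Sv (v : ℝ) (hv : 0 ≤ v) : ∫ x in Sv v, x ^ 2 ∂gammaStd = 2 * Jt v := by
  rw [setIntegral_gammaStd _ (measurableSet_Sv v),
    setIntegral_Sv _ (integrable_mul_pow_stdphi 2) v hv]
  simp only [stdphi_neg, neg_sq]
  have : ∫ x in Ioi v, stdphi x * x ^ 2 = Jt v := by
    rw [Jt]
    apply setIntegral_congr_fun measurableSet_Ioi
    intro x _
    ring
  rw [this]
  ring

lemma integral_id_Sv (v : ℝ) (hv : 0 ≤ v) : ∫ x in Sv v, x ∂gammaStd = 0 := by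
  have h := setIntegral_gammaStd (fun x => x) (measurableSet_Sv v)
  rw [h, setIntegral_Sv _ (by simpa using integrable_mul_pow_stdphi 1) v hv]
  simp only [stdphi_neg, mul_neg]
  rw [integral_neg]
  ring

lemma integral_id_gammaStd : ∫ x, x ∂gammaStd = 0 := by
  rw [integral_gammaStd, integral_split_all _ (by simpa using integrable_mul_pow_stdphi 1)]
  simp only [stdphi_neg, mul_neg]
  rw [integral_neg]
  ring

lemma integral_sq_gammaStd : ∫ x, x ^ 2 ∂gammaStd = 1 := by
  have h : (fun x : ℝ => x ^ 2) = fun x : ℝ => x ^ 2 := rfl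
  rw [show (∫ x, x ^ 2 ∂gammaStd) = ∫ x, (fun y : ℝ => y ^ 2) x ∂gammaStd from rfl,
    integral_gammaStd, integral_split_all _ (integrable_mul_pow_stdphi 2)]
  simp only [stdphi_neg, neg_sq]
  have h2 : ∫ x in Ioi (0:ℝ), stdphi x * x ^ 2 = Jt 0 := by
    rw [Jt]
    apply setIntegral_congr_fun measurableSet_Ioi
    intro x _
    ring
  rw [h2, Jt_eq, Gt_zero]
  norm_num

section prob
variable {Ω : Type*} [MeasurableSpace Ω] {P : Measure Ω} [IsProbabilityMeasure P]
  {Y Z : Ω → ℝ}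

lemma cCorr_eq (hY : Measurable Y) (hZ : Measurable Z)
    (hYlaw : Measure.map Y P = gaussianReal 0 1) (hZlaw : Measure.map Z P = gaussianReal 0 1)
    (hind : IndepFun Y Z P) {ρ : ℝ} (hρ : ρ ∈ Set.Ioo (0 : ℝ) 1)
    {X : Ω → ℝ} (hX : X = fun ω => ρ * Y ω + Real.sqrt (1 - ρ ^ 2) * Z ω)
    {v : ℝ} (hv : 2 ≤ v) :
    cCorr P {ω | |Y ω| > v} X Y = corrF ρ v := by
  classical
  obtain ⟨hρ0, hρ1⟩ := hρ
  have hv0 : (0:ℝ) ≤ v := by linarith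
  set c : ℝ := Real.sqrt (1 - ρ ^ 2) with hc_def
  have hc2 : c ^ 2 = 1 - ρ ^ 2 := Real.sq_sqrt (by nlinarith)
  set A : Set Ω := {ω | |Y ω| > v} with hA_def
  have hApre : A = Y ⁻¹' (Sv v) := rfl
  have hA : MeasurableSet A := hY (measurableSet_Sv v)
  have hYg : Measure.map Y P = gammaStd := hYlaw
  have hZg : Measure.map Z P = gammaStd := hZlaw
  -- measure of A
  have hPA : (P A).toReal = 2 * Gt v := by
    have h1 : P A = gammaStd (Sv v) := by
      rw [hApre, ← Measure.map_apply hY (measurableSet_Sv v), hYg]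
    rw [h1, toReal_gammaStd_Sv v hv0]
  have hGt := Gt_pos v
  have hp0 : (0:ℝ) < (P A).toReal := by rw [hPA]; linarith
  -- transfer of set integrals in Y
  have hsetint : ∀ g : ℝ → ℝ, Measurable g →
      ∫ ω in A, g (Y ω) ∂P = ∫ y in Sv v, g y ∂gammaStd := by
    intro g hg
    have h := setIntegral_map (μ := P) (g := Y) (f := g) (measurableSet_Sv v)
      hg.aestronglyMeasurable hY.aemeasurable
    rw [hYg] at h
    rw [hApre]
    exact h.symm
  have hIY : ∫ ω in A, Y ω ∂P = 0 := by
    have := hsetint (fun y => y) measurable_id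
    rw [this, integral_id_Sv v hv0]
  have hIY2 : ∫ ω in A, (Y ω) ^ 2 ∂P = 2 * Jt v := by
    have := hsetint (fun y => y ^ 2) (measurable_id.pow_const 2)
    rw [this, integral_sq_Sv v hv0]
  -- global integrability
  have hYint : Integrable Y P := by
    have h := integrable_map_measure (μ := P) (f := Y) (g := fun x : ℝ => x)
      measurable_id.aestronglyMeasurable hY.aemeasurable
    rw [hYg] at h
    exact h.mp (by simpa using integrable_pow_gammaStd 1)
  have hZint : Integrable Z P := by
    have h := integrable_map_measure (μ := P) (f := Z) (g := fun x : ℝ => x)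
      measurable_id.aestronglyMeasurable hZ.aemeasurable
    rw [hZg] at h
    exact h.mp (by simpa using integrable_pow_gammaStd 1)
  have hY2int : Integrable (fun ω => (Y ω) ^ 2) P := by
    have h := integrable_map_measure (μ := P) (f := Y) (g := fun x : ℝ => x ^ 2)
      (measurable_id.pow_const 2).aestronglyMeasurable hY.aemeasurable
    rw [hYg] at h
    exact h.mp (integrable_pow_gammaStd 2)
  have hZ2int : Integrable (fun ω => (Z ω) ^ 2) P := by
    have h := integrable_map_measure (μ := P) (f := Z) (g := fun x : ℝ => x ^ 2)
      (measurable_id.pow_const 2).aestronglyMeasurable hZ.aemeasurable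
    rw [hZg] at h
    exact h.mp (integrable_pow_gammaStd 2)
  have hYZint : Integrable (fun ω => Y ω * Z ω) P := by
    have := hind.integrable_mul hYint hZint
    exact this
  -- expectations of Z
  have hEZ : ∫ ω, Z ω ∂P = 0 := by
    have h := integral_map (μ := P) (φ := Z) (f := fun x : ℝ => x) hZ.aemeasurable
      measurable_id.aestronglyMeasurable
    rw [hZg] at h
    rw [← h]
    exact integral_id_gammaStd
  have hEZ2 : ∫ ω, (Z ω) ^ 2 ∂P = 1 := by
    have h := integral_map (μ := P) (φ := Z) (f := fun x : ℝ => x ^ 2) hZ.aemeasurable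
      (measurable_id.pow_const 2).aestronglyMeasurable
    rw [hZg] at h
    rw [← h]
    exact integral_sq_gammaStd
  -- independence-based integrals
  set oneS : ℝ → ℝ := (Sv v).indicator fun _ => 1 with honeS_def
  set idS : ℝ → ℝ := (Sv v).indicator fun y => y with hidS_def
  have honeS_meas : Measurable oneS := measurable_const.indicator (measurableSet_Sv v)
  have hidS_meas : Measurable idS := measurable_id.indicator (measurableSet_Sv v)
  have honeY : ∀ ω, A.indicator (fun _ => (1:ℝ)) ω = oneS (Y ω) := by
    intro ω
    rw [hApre, honeS_def]
    by_cases h : Y ω ∈ Sv v <;> simp [Set.indicator_apply, h]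
  have hint1 : Integrable (fun ω => oneS (Y ω)) P := by
    apply ((integrable_const (1:ℝ)).indicator hA).congr
    filter_upwards with ω using honeY ω
  have hintIdS : Integrable (fun ω => idS (Y ω)) P := by
    apply (hYint.indicator hA).congr
    filter_upwards with ω
    rw [hApre, hidS_def]
    by_cases h : Y ω ∈ Sv v <;> simp [Set.indicator_apply, h]
  have hEoneY : ∫ ω, oneS (Y ω) ∂P = (P A).toReal := by
    rw [← integral_congr_ae (ae_of_all _ honeY)]
    rw [integral_indicator_const (1:ℝ) hA]
    simp
    rfl
  have hIZ : ∫ ω in A, Z ω ∂P = 0 := by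
    rw [← integral_indicator hA]
    have heq : A.indicator Z = fun ω => oneS (Y ω) * Z ω := by
      funext ω
      rw [hApre, honeS_def, Set.indicator_apply, Set.indicator_apply]
      by_cases h : Y ω ∈ Sv v <;> simp [h]
    rw [heq]
    have h2 : ∫ ω, oneS (Y ω) * Z ω ∂P = (∫ ω, oneS (Y ω) ∂P) * ∫ ω, Z ω ∂P :=
      (hind.comp honeS_meas measurable_id).integral_fun_mul_eq_mul_integral hint1.aestronglyMeasurable
        hZint.aestronglyMeasurable
    rw [h2, hEZ, mul_zero]
  have hIZ2 : ∫ ω in A, (Z ω) ^ 2 ∂P = 2 * Gt v := by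
    rw [← integral_indicator hA]
    have heq : A.indicator (fun ω => (Z ω) ^ 2) = fun ω => oneS (Y ω) * (Z ω) ^ 2 := by
      funext ω
      rw [hApre, honeS_def, Set.indicator_apply, Set.indicator_apply]
      by_cases h : Y ω ∈ Sv v <;> simp [h]
    rw [heq]
    have h2 : ∫ ω, oneS (Y ω) * (Z ω) ^ 2 ∂P
        = (∫ ω, oneS (Y ω) ∂P) * ∫ ω, (Z ω) ^ 2 ∂P :=
      (hind.comp honeS_meas (measurable_id.pow_const 2)).integral_fun_mul_eq_mul_integral
        hint1.aestronglyMeasurable hZ2int.aestronglyMeasurable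
    rw [h2, hEZ2, mul_one, hEoneY, hPA]
  have hIYZ : ∫ ω in A, Y ω * Z ω ∂P = 0 := by
    rw [← integral_indicator hA]
    have heq : A.indicator (fun ω => Y ω * Z ω) = fun ω => idS (Y ω) * Z ω := by
      funext ω
      rw [hApre, hidS_def, Set.indicator_apply, Set.indicator_apply]
      by_cases h : Y ω ∈ Sv v <;> simp [h]
    rw [heq]
    have h2 : ∫ ω, idS (Y ω) * Z ω ∂P = (∫ ω, idS (Y ω) ∂P) * ∫ ω, Z ω ∂P :=
      (hind.comp hidS_meas measurable_id).integral_fun_mul_eq_mul_integral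
        hintIdS.aestronglyMeasurable hZint.aestronglyMeasurable
    rw [h2, hEZ, mul_zero]
  -- integrals of X over A
  have hEXA : ∫ ω in A, X ω ∂P = 0 := by
    rw [hX]
    rw [integral_add ((hYint.integrableOn).const_mul ρ) ((hZint.integrableOn).const_mul c)]
    rw [integral_const_mul, integral_const_mul, hIY, hIZ]
    ring
  have hEXYA : ∫ ω in A, X ω * Y ω ∂P = ρ * (2 * Jt v) := by
    have hptw : ∀ ω, X ω * Y ω = ρ * (Y ω) ^ 2 + c * (Y ω * Z ω) := by
      intro ω; rw [hX]; ring
    rw [integral_congr_ae (ae_of_all _ fun ω => hptw ω)]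
    rw [integral_add ((hY2int.integrableOn).const_mul ρ) ((hYZint.integrableOn).const_mul c)]
    rw [integral_const_mul, integral_const_mul, hIY2, hIYZ]
    ring
  have hEX2A : ∫ ω in A, (X ω) ^ 2 ∂P = ρ ^ 2 * (2 * Jt v) + c ^ 2 * (2 * Gt v) := by
    have hptw : ∀ ω, (X ω) ^ 2
        = (ρ ^ 2 * (Y ω) ^ 2 + c ^ 2 * (Z ω) ^ 2) + (2 * ρ * c) * (Y ω * Z ω) := by
      intro ω; rw [hX]; ring
    rw [integral_congr_ae (ae_of_all _ fun ω => hptw ω)]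
    have i1 : IntegrableOn (fun ω => ρ ^ 2 * (Y ω) ^ 2 + c ^ 2 * (Z ω) ^ 2) A P :=
      ((hY2int.integrableOn).const_mul _).add ((hZ2int.integrableOn).const_mul _)
    rw [integral_add i1 ((hYZint.integrableOn).const_mul _)]
    rw [integral_add ((hY2int.integrableOn).const_mul _) ((hZ2int.integrableOn).const_mul _)]
    rw [integral_const_mul, integral_const_mul, integral_const_mul, hIY2, hIZ2, hIYZ]
    ring
  -- conditional moments
  set m : ℝ := Jt v / Gt v with hm_def
  have hm4 : (4:ℝ) ≤ m := by
    have := m_lower v hv0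
    nlinarith
  have hm0 : (0:ℝ) < m := by linarith
  have e1 : cExp P A Y = 0 := by simp only [cExp]; rw [hIY, zero_div]
  have e2 : cExp P A X = 0 := by simp only [cExp]; rw [hEXA, zero_div]
  have e3 : cExp P A (fun ω => X ω * Y ω) = ρ * m := by
    simp only [cExp]; rw [hEXYA, hPA, hm_def]
    field_simp
  have e4 : cExp P A (fun ω => (Y ω) ^ 2) = m := by
    simp only [cExp]; rw [hIY2, hPA, hm_def]
    rw [div_eq_div_iff (by linarith) hGt.ne']
    ring
  have e5 : cExp P A (fun ω => (X ω) ^ 2) = ρ ^ 2 * m + (1 - ρ ^ 2) := by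
    simp only [cExp]; rw [hEX2A, hPA, hc2, hm_def]
    field_simp
  have hD0 : (0:ℝ) < ρ ^ 2 * m + (1 - ρ ^ 2) := by
    nlinarith [mul_nonneg (sq_nonneg ρ) (by linarith : (0:ℝ) ≤ m - 1)]
  simp only [cCorr, cCov, cVar, corrF]
  rw [e1, e2, e3, e4, e5, ← hm_def]
  rw [mul_zero, sub_zero, zero_pow two_ne_zero, sub_zero, sub_zero]
  rw [Real.sqrt_mul hD0.le]
  rw [show ρ * m = ρ * Real.sqrt m * Real.sqrt m by
    rw [mul_assoc, Real.mul_self_sqrt hm0.le]]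
  rw [mul_div_mul_right _ _ (Real.sqrt_ne_zero'.2 hm0)]

end prob

theorem stmt6 {Ω : Type*} [MeasurableSpace Ω] (P : Measure Ω) [IsProbabilityMeasure P]
    (Y Z : Ω → ℝ) (hY : Measurable Y) (hZ : Measurable Z)
    (hYlaw : Measure.map Y P = gaussianReal 0 1) (hZlaw : Measure.map Z P = gaussianReal 0 1)
    (hind : IndepFun Y Z P)
    (ρ : ℝ) (hρ : ρ ∈ Set.Ioo (0 : ℝ) 1)
    (X : Ω → ℝ) (hX : X = fun ω => ρ * Y ω + Real.sqrt (1 - ρ ^ 2) * Z ω) :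
    Tendsto (fun v : ℝ => cCorr P {ω | |Y ω| > v} X Y) atTop (nhds 1) ∧
      Tendsto (fun v : ℝ => v ^ 2 * (1 - cCorr P {ω | |Y ω| > v} X Y)) atTop
        (nhds ((1 - ρ ^ 2) / (2 * ρ ^ 2))) := by
  constructor
  · apply Tendsto.congr' ?_ (tendsto_corrF hρ)
    filter_upwards [eventually_ge_atTop (2:ℝ)] with v hv
    exact (cCorr_eq hY hZ hYlaw hZlaw hind hρ hX hv).symm
  · apply Tendsto.congr' ?_ (tendsto_sq_mul_one_sub_corrF hρ)
    filter_upwards [eventually_ge_atTop (2:ℝ)] with v hv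
    rw [cCorr_eq hY hZ hYlaw hZlaw hind hρ hX hv]
end

section
/- Let X = αY + ε where α ≠ 0 is a real constant, Y and ε are independent square-integrable real random variables with Var(Y) > 0 and Var(ε) = σ_ε² > 0. Then for any measurable A ⊆ ℝ with P(Y ∈ A) > 0 and Var(Y | Y ∈ A) > 0, the conditional correlation of X and Y given Y ∈ A equals ρ / sqrt(ρ² + (1−ρ²)·Var(Y)/Var(Y | Y ∈ A)), where ρ = α·σ_Y / sqrt(α²σ_Y² + σ_ε²) is the unconditional correlation. -/
open MeasureTheory ProbabilityTheory Filter Real Set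

theorem stmt7 {Ω : Type*} [MeasurableSpace Ω] (P : Measure Ω) [IsProbabilityMeasure P]
    (Y ε : Ω → ℝ) (hY : Measurable Y) (hε : Measurable ε)
    (hY2 : MemLp Y 2 P) (hε2 : MemLp ε 2 P)
    (hind : IndepFun Y ε P)
    (α : ℝ) (hα : α ≠ 0)
    (σε : ℝ) (hσε : 0 < σε) (hVarε : variance ε P = σε ^ 2)
    (hVarY : 0 < variance Y P)
    (X : Ω → ℝ) (hX : X = fun ω => α * Y ω + ε ω)
    (ρ : ℝ)
    (hρ : ρ = α * Real.sqrt (variance Y P)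
        / Real.sqrt (α ^ 2 * variance Y P + σε ^ 2))
    (A : Set ℝ) (hA : MeasurableSet A) (hpos : 0 < P (Y ⁻¹' A))
    (hVarA : 0 < cVar P (Y ⁻¹' A) Y) :
    cCorr P (Y ⁻¹' A) X Y
      = ρ / Real.sqrt (ρ ^ 2 + (1 - ρ ^ 2) * variance Y P / cVar P (Y ⁻¹' A) Y) := by
  classical
  set B : Set Ω := Y ⁻¹' A with hB
  have hBm : MeasurableSet B := hY hA
  set p : ℝ := (P B).toReal with hpdef
  have hp : 0 < p := ENNReal.toReal_pos hpos.ne' (measure_ne_top _ _)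
  have hp0 : p ≠ 0 := hp.ne'
  -- basic integrability
  have hYint : Integrable Y P := hY2.integrable one_le_two
  have hεint : Integrable ε P := hε2.integrable one_le_two
  have hYsq : Integrable (fun ω => Y ω ^ 2) P := hY2.integrable_sq
  have hεsq : Integrable (fun ω => ε ω ^ 2) P := hε2.integrable_sq
  have hYε : Integrable (fun ω => Y ω * ε ω) P := hind.integrable_mul hYint hεint
  set m : ℝ := ∫ ω, ε ω ∂P with hm
  set s : ℝ := ∫ ω, ε ω ^ 2 ∂P with hs
  set IY : ℝ := ∫ ω in B, Y ω ∂P with hIY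
  set IY2 : ℝ := ∫ ω in B, Y ω ^ 2 ∂P with hIY2
  -- indicator helpers
  have hψm : Measurable (A.indicator (fun _ => (1:ℝ))) := measurable_const.indicator hA
  have hφm : Measurable (A.indicator (id : ℝ → ℝ)) := measurable_id.indicator hA
  have hf1 : (A.indicator (fun _ => (1:ℝ))) ∘ Y = B.indicator (fun _ => (1:ℝ)) := by
    funext ω; by_cases h : Y ω ∈ A <;> simp [hB, Set.indicator, h]
  have hf2 : (A.indicator (id : ℝ → ℝ)) ∘ Y = B.indicator Y := by
    funext ω; by_cases h : Y ω ∈ A <;> simp [hB, Set.indicator, h]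
  have hf1int : Integrable ((A.indicator (fun _ => (1:ℝ))) ∘ Y) P := by
    rw [hf1]; exact (integrable_const (1:ℝ)).indicator hBm
  have hf2int : Integrable ((A.indicator (id : ℝ → ℝ)) ∘ Y) P := by
    rw [hf2]; exact hYint.indicator hBm
  have hIf1 : (∫ ω, ((A.indicator (fun _ => (1:ℝ))) ∘ Y) ω ∂P) = p := by
    rw [hf1, integral_indicator_const (1:ℝ) hBm, smul_eq_mul, mul_one]
    rfl
  have hIf2 : (∫ ω, ((A.indicator (id : ℝ → ℝ)) ∘ Y) ω ∂P) = IY := by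
    rw [hf2, integral_indicator hBm]
  -- I1 : ∫_B ε = p * m
  have I1 : (∫ ω in B, ε ω ∂P) = p * m := by
    have h1 : (∫ ω in B, ε ω ∂P) = ∫ ω, B.indicator ε ω ∂P := (integral_indicator hBm).symm
    have h2 : B.indicator ε = ((A.indicator (fun _ => (1:ℝ))) ∘ Y) * (id ∘ ε) := by
      funext ω; by_cases h : Y ω ∈ A <;> simp [hB, Set.indicator, h]
    rw [h1, h2, (hind.comp hψm measurable_id).integral_mul_eq_mul_integral hf1int.aestronglyMeasurable hεint.aestronglyMeasurable, hIf1]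
    rfl
  -- I2 : ∫_B Yε = IY * m
  have I2 : (∫ ω in B, Y ω * ε ω ∂P) = IY * m := by
    have h1 : (∫ ω in B, Y ω * ε ω ∂P) = ∫ ω, B.indicator (fun ω => Y ω * ε ω) ω ∂P :=
      (integral_indicator hBm).symm
    have h2 : B.indicator (fun ω => Y ω * ε ω)
        = ((A.indicator (id : ℝ → ℝ)) ∘ Y) * (id ∘ ε) := by
      funext ω; by_cases h : Y ω ∈ A <;> simp [hB, Set.indicator, h]
    rw [h1, h2, (hind.comp hφm measurable_id).integral_mul_eq_mul_integral hf2int.aestronglyMeasurable hεint.aestronglyMeasurable, hIf2]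
    rfl
  -- I3 : ∫_B ε² = p * s
  have I3 : (∫ ω in B, ε ω ^ 2 ∂P) = p * s := by
    have h1 : (∫ ω in B, ε ω ^ 2 ∂P) = ∫ ω, B.indicator (fun ω => ε ω ^ 2) ω ∂P :=
      (integral_indicator hBm).symm
    have h2 : B.indicator (fun ω => ε ω ^ 2)
        = ((A.indicator (fun _ => (1:ℝ))) ∘ Y) * ((fun x : ℝ => x ^ 2) ∘ ε) := by
      funext ω; by_cases h : Y ω ∈ A <;> simp [hB, Set.indicator, h]
    have hεsq' : Integrable ((fun x : ℝ => x ^ 2) ∘ ε) P := hεsq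
    have hsqm : Measurable (fun x : ℝ => x ^ 2) := measurable_id.pow_const 2
    rw [h1, h2, (hind.comp hψm hsqm).integral_mul_eq_mul_integral hf1int.aestronglyMeasurable hεsq'.aestronglyMeasurable, hIf1]
    rfl
  -- set integrals of X, X*Y, X^2
  have A1 : (∫ ω in B, X ω ∂P) = α * IY + p * m := by
    rw [hX]
    rw [integral_add (hYint.integrableOn.const_mul α) hεint.integrableOn,
      integral_const_mul, I1]
  have A2 : (∫ ω in B, X ω * Y ω ∂P) = α * IY2 + IY * m := by
    have h : (fun ω => X ω * Y ω) = fun ω => α * Y ω ^ 2 + Y ω * ε ω := by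
      rw [hX]; funext ω; ring
    rw [h, integral_add (hYsq.integrableOn.const_mul α) hYε.integrableOn,
      integral_const_mul, I2]
  have A3 : (∫ ω in B, X ω ^ 2 ∂P) = α ^ 2 * IY2 + 2 * α * (IY * m) + p * s := by
    have h : (fun ω => X ω ^ 2)
        = fun ω => (α ^ 2 * Y ω ^ 2 + 2 * α * (Y ω * ε ω)) + ε ω ^ 2 := by
      rw [hX]; funext ω; ring
    have i1 : IntegrableOn (fun ω => α ^ 2 * Y ω ^ 2) B P := hYsq.integrableOn.const_mul _
    have i2 : IntegrableOn (fun ω => 2 * α * (Y ω * ε ω)) B P := hYε.integrableOn.const_mul _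
    have i12 : IntegrableOn (fun ω => α ^ 2 * Y ω ^ 2 + 2 * α * (Y ω * ε ω)) B P := i1.add i2
    rw [h, integral_add i12 hεsq.integrableOn, integral_add i1 i2,
      integral_const_mul, integral_const_mul, I2, I3]
  -- conditional moments
  set e1 : ℝ := IY / p with he1
  set e2 : ℝ := IY2 / p with he2
  have hcEY : cExp P B Y = e1 := rfl
  have hv : cVar P B Y = e2 - e1 ^ 2 := by
    simp only [cVar, cExp, he1, he2, hIY, hIY2, hpdef]
  set v : ℝ := e2 - e1 ^ 2 with hvdef
  have hv0 : 0 < v := hv ▸ hVarA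
  -- variance of ε
  have hεvar : s - m ^ 2 = σε ^ 2 := by
    have := variance_eq_sub hε2
    rw [← hVarε, this]
    simp only [hs, hm]
    congr 1
  -- covariance and variance computations
  have hcov : cCov P B X Y = α * v := by
    simp only [cCov, cExp, A1, A2, he1, he2, hvdef, ← hpdef, ← hIY]
    field_simp
    ring
  have hvarX : cVar P B X = α ^ 2 * v + σε ^ 2 := by
    simp only [cVar, cExp, A1, A3, he1, he2, hvdef, ← hεvar, ← hpdef, ← hIY]
    field_simp
    ring
  -- abbreviations for the algebra
  set σ2 : ℝ := variance Y P with hσ2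
  have hσ2pos : 0 < σ2 := hVarY
  set E : ℝ := α ^ 2 * v + σε ^ 2 with hE
  have hEpos : 0 < E := by positivity
  set D : ℝ := α ^ 2 * σ2 + σε ^ 2 with hD
  have hDpos : 0 < D := by positivity
  have hρ2 : ρ ^ 2 = α ^ 2 * σ2 / D := by
    rw [hρ, div_pow, mul_pow, Real.sq_sqrt hσ2pos.le, Real.sq_sqrt hDpos.le]
  have hinner : ρ ^ 2 + (1 - ρ ^ 2) * σ2 / v = σ2 * E / (D * v) := by
    rw [hρ2, hE, hD]
    field_simp
    ring
  -- final algebra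
  have h1 : (0:ℝ) < Real.sqrt v := Real.sqrt_pos.2 hv0
  have h2 : (0:ℝ) < Real.sqrt E := Real.sqrt_pos.2 hEpos
  have h3 : (0:ℝ) < Real.sqrt σ2 := Real.sqrt_pos.2 hσ2pos
  have h4 : (0:ℝ) < Real.sqrt D := Real.sqrt_pos.2 hDpos
  have hvv : Real.sqrt v * Real.sqrt v = v := Real.mul_self_sqrt hv0.le
  rw [show cCorr P B X Y = cCov P B X Y / Real.sqrt (cVar P B X * cVar P B Y) from rfl,
    hcov, hvarX, hv, hinner, hρ, Real.sqrt_mul hEpos.le,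
    Real.sqrt_div (by positivity : (0:ℝ) ≤ σ2 * E), Real.sqrt_mul hσ2pos.le,
    Real.sqrt_mul hDpos.le]
  have hL : α * v / (Real.sqrt E * Real.sqrt v) = α * Real.sqrt v / Real.sqrt E := by
    calc α * v / (Real.sqrt E * Real.sqrt v)
        = α * Real.sqrt v * Real.sqrt v / (Real.sqrt E * Real.sqrt v) := by
          rw [mul_assoc, hvv]
      _ = α * Real.sqrt v / Real.sqrt E := by
          rw [mul_div_mul_right _ _ h1.ne']
  have hR : α * Real.sqrt σ2 / Real.sqrt D
      / (Real.sqrt σ2 * Real.sqrt E / (Real.sqrt D * Real.sqrt v))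
      = α * Real.sqrt v / Real.sqrt E := by
    field_simp
  rw [hL, hR]
end

section
/- In the one-factor model X = αY + ε with α > 0 and ε independent of Y, if Var(Y | Y ∈ A_v) → ∞ as v → ∞ along a family of conditioning sets A_v, then the conditional correlation ρ_{A_v} of X and Y given Y ∈ A_v tends to 1. -/
open MeasureTheory ProbabilityTheory Filter Real Set

theorem stmt8 {Ω : Type*} [MeasurableSpace Ω] (P : Measure Ω) [IsProbabilityMeasure P]
    (Y ε : Ω → ℝ) (hY : Measurable Y) (hε : Measurable ε)
    (hY2 : MemLp Y 2 P) (hε2 : MemLp ε 2 P)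
    (hind : IndepFun Y ε P)
    (α : ℝ) (hα : 0 < α)
    (σε : ℝ) (hVarε : variance ε P = σε ^ 2)
    (X : Ω → ℝ) (hX : X = fun ω => α * Y ω + ε ω)
    (A : ℝ → Set ℝ) (hA : ∀ v, MeasurableSet (A v))
    (hpos : ∀ v, 0 < P (Y ⁻¹' A v))
    (hvar : Tendsto (fun v : ℝ => cVar P (Y ⁻¹' A v) Y) atTop atTop) :
    Tendsto (fun v : ℝ => cCorr P (Y ⁻¹' A v) X Y) atTop (nhds 1) := by
  have hYint : Integrable Y P := hY2.integrable one_le_two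
  have hεint : Integrable ε P := hε2.integrable one_le_two
  have hY2int : Integrable (fun ω => Y ω ^ 2) P := by
    simpa [sq] using hY2.integrable_sq
  have hYεint : Integrable (fun ω => Y ω * ε ω) P := by
    exact hind.integrable_mul hYint hεint
  set m := ∫ ω, ε ω ∂P with hm
  set m2 := ∫ ω, ε ω ^ 2 ∂P with hm2def
  have hσ : m2 - m ^ 2 = σε ^ 2 := by
    rw [← hVarε, variance_eq_sub hε2]
    simp [hm, hm2def, Pi.pow_apply]
  -- per-v structural identities
  have key : ∀ v : ℝ, cCov P (Y ⁻¹' A v) X Y = α * cVar P (Y ⁻¹' A v) Y ∧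
      cVar P (Y ⁻¹' A v) X = α ^ 2 * cVar P (Y ⁻¹' A v) Y + σε ^ 2 := by
    intro v
    set s : Set Ω := Y ⁻¹' A v with hs_def
    have hs : MeasurableSet s := hY (hA v)
    have hpfin : P s ≠ ⊤ := measure_ne_top _ _
    have hp : 0 < (P s).toReal := ENNReal.toReal_pos (hpos v).ne' hpfin
    set p : ℝ := (P s).toReal with hp_def
    have hpne : p ≠ 0 := hp.ne'
    -- indicator function on ℝ
    set g : ℝ → ℝ := (A v).indicator (fun _ => (1:ℝ)) with hg_def
    have hgm : Measurable g := measurable_const.indicator (hA v)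
    have hgY : ∫ ω, g (Y ω) ∂P = p := by
      have : (fun ω => g (Y ω)) = s.indicator (fun _ => (1:ℝ)) := by
        funext ω
        by_cases h : Y ω ∈ A v <;>
          simp [hg_def, hs_def, Set.indicator, h, Set.mem_preimage]
      rw [this, integral_indicator hs]
      simp [hp_def, measureReal_def]
    -- ∫_s ε = p * m
    have hI1 : ∫ ω in s, ε ω ∂P = p * m := by
      rw [← integral_indicator hs]
      have heq : s.indicator ε = fun ω => g (Y ω) * ε ω := by
        funext ω
        by_cases h : Y ω ∈ A v <;>
          simp [hg_def, hs_def, Set.indicator, h, Set.mem_preimage]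
      rw [heq]
      have hi : IndepFun (fun ω => g (Y ω)) ε P := hind.comp hgm measurable_id
      have := hi.integral_mul_eq_mul_integral (hgm.comp hY).aestronglyMeasurable hε.aestronglyMeasurable
      simp only [Pi.mul_apply] at this
      rw [this, hgY]
    -- ∫_s ε² = p * m2
    have hI3 : ∫ ω in s, ε ω ^ 2 ∂P = p * m2 := by
      rw [← integral_indicator hs]
      have heq : s.indicator (fun ω => ε ω ^ 2) = fun ω => g (Y ω) * ε ω ^ 2 := by
        funext ω
        by_cases h : Y ω ∈ A v <;>
          simp [hg_def, hs_def, Set.indicator, h, Set.mem_preimage]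
      rw [heq]
      have hi : IndepFun (fun ω => g (Y ω)) (fun ω => ε ω ^ 2) P :=
        hind.comp hgm (measurable_id.pow_const 2)
      have := hi.integral_mul_eq_mul_integral (hgm.comp hY).aestronglyMeasurable
        ((hε.pow_const 2).aestronglyMeasurable)
      simp only [Pi.mul_apply] at this
      rw [this, hgY, hm2def]
    -- ∫_s Y ε = (∫_s Y) * m
    have hI2 : ∫ ω in s, Y ω * ε ω ∂P = (∫ ω in s, Y ω ∂P) * m := by
      rw [← integral_indicator hs]
      have heq : s.indicator (fun ω => Y ω * ε ω) = fun ω => (g (Y ω) * Y ω) * ε ω := by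
        funext ω
        by_cases h : Y ω ∈ A v <;>
          simp [hg_def, hs_def, Set.indicator, h, Set.mem_preimage]
      rw [heq]
      have hi : IndepFun (fun ω => g (Y ω) * Y ω) ε P :=
        hind.comp (hgm.mul measurable_id) measurable_id
      have := hi.integral_mul_eq_mul_integral ((hgm.comp hY).mul hY).aestronglyMeasurable
        hε.aestronglyMeasurable
      simp only [Pi.mul_apply] at this
      rw [this]
      congr 1
      rw [← integral_indicator hs]
      congr 1
      funext ω
      by_cases h : Y ω ∈ A v <;>
        simp [hg_def, hs_def, Set.indicator, h, Set.mem_preimage]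
    set e1 : ℝ := cExp P s Y with he1
    set e2 : ℝ := cExp P s (fun ω => Y ω ^ 2) with he2
    have hsY : ∫ ω in s, Y ω ∂P = p * e1 := by
      rw [he1]; unfold cExp; rw [← hp_def]; field_simp
    have hsY2 : ∫ ω in s, Y ω ^ 2 ∂P = p * e2 := by
      rw [he2]; unfold cExp; rw [← hp_def]; field_simp
    -- cExp of X
    have hEX : cExp P s X = α * e1 + m := by
      unfold cExp
      rw [hX]
      rw [integral_add ((hYint.const_mul α).restrict) (hεint.restrict),
        integral_const_mul, hsY, hI1]
      rw [← hp_def]; field_simp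
    -- cExp of X*Y
    have hEXY : cExp P s (fun ω => X ω * Y ω) = α * e2 + m * e1 := by
      unfold cExp
      have : (fun ω => X ω * Y ω) = fun ω => α * Y ω ^ 2 + Y ω * ε ω := by
        funext ω; rw [hX]; ring
      rw [this, integral_add ((hY2int.const_mul α).restrict) (hYεint.restrict),
        integral_const_mul, hsY2, hI2, hsY]
      rw [← hp_def]; field_simp
    -- cExp of X²
    have hEX2 : cExp P s (fun ω => X ω ^ 2) = α ^ 2 * e2 + 2 * α * m * e1 + m2 := by
      unfold cExp
      have : (fun ω => X ω ^ 2) =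
          fun ω => (α ^ 2 * Y ω ^ 2 + (2 * α) * (Y ω * ε ω)) + ε ω ^ 2 := by
        funext ω; rw [hX]; ring
      have hint1 : Integrable (fun ω => α ^ 2 * Y ω ^ 2 + (2 * α) * (Y ω * ε ω)) P :=
        (hY2int.const_mul _).add (hYεint.const_mul _)
      have hε2int : Integrable (fun ω => ε ω ^ 2) P := by
        simpa [sq] using hε2.integrable_sq
      rw [this, integral_add (hint1.restrict) (hε2int.restrict),
        integral_add ((hY2int.const_mul _).restrict) ((hYεint.const_mul _).restrict),
        integral_const_mul, integral_const_mul, hsY2, hI2, hsY, hI3]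
      rw [← hp_def]; field_simp
    constructor
    · unfold cCov cVar
      rw [hEXY, hEX, ← he1, ← he2]
      ring
    · unfold cVar
      rw [hEX2, hEX, ← he1, ← he2, ← hσ]
      ring
  -- rewrite cCorr explicitly
  have heq : (fun v : ℝ => cCorr P (Y ⁻¹' A v) X Y) =
      (fun V : ℝ => α * V / Real.sqrt ((α ^ 2 * V + σε ^ 2) * V)) ∘
        (fun v : ℝ => cVar P (Y ⁻¹' A v) Y) := by
    funext v
    obtain ⟨h1, h2⟩ := key v
    simp only [Function.comp, cCorr, h1, h2]
  rw [heq]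
  -- limit of the scalar function
  have hσnn : 0 ≤ σε ^ 2 := sq_nonneg _
  have hF : Tendsto (fun V : ℝ => α * V / Real.sqrt ((α ^ 2 * V + σε ^ 2) * V))
      atTop (nhds 1) := by
    have hlim : Tendsto (fun V : ℝ => α / Real.sqrt (α ^ 2 + σε ^ 2 / V))
        atTop (nhds 1) := by
      have h0 : Tendsto (fun V : ℝ => σε ^ 2 / V) atTop (nhds 0) :=
        tendsto_const_nhds.div_atTop tendsto_id
      have h1 : Tendsto (fun V : ℝ => α ^ 2 + σε ^ 2 / V) atTop (nhds (α ^ 2)) := by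
        simpa using tendsto_const_nhds.add h0
      have h2 : Tendsto (fun V : ℝ => Real.sqrt (α ^ 2 + σε ^ 2 / V)) atTop
          (nhds α) := by
        have := (Real.continuous_sqrt.tendsto (α ^ 2)).comp h1
        simpa [Real.sqrt_sq hα.le, Function.comp_def] using this
      have h3 : Tendsto (fun V : ℝ => α / Real.sqrt (α ^ 2 + σε ^ 2 / V)) atTop
          (nhds (α / α)) :=
        (tendsto_const_nhds : Tendsto (fun _ : ℝ => α) atTop (nhds α)).div h2 hα.ne'
      simpa [div_self hα.ne'] using h3
    refine hlim.congr' ?_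
    filter_upwards [eventually_gt_atTop (0:ℝ)] with V hV
    have hVne : V ≠ 0 := hV.ne'
    have hc : 0 ≤ α ^ 2 + σε ^ 2 / V := by positivity
    have hfac : (α ^ 2 * V + σε ^ 2) * V = (α ^ 2 + σε ^ 2 / V) * V ^ 2 := by
      field_simp
    rw [hfac, Real.sqrt_mul hc, Real.sqrt_sq hV.le]
    rw [mul_div_mul_right _ _ hVne]
  exact hF.comp hvar
end

section
/- For a bivariate Gaussian pair (X,Y) with zero means, unit variances and correlation ρ ∈ (−1,1), the bivariate survival function satisfies L(u,u;ρ) ~ ((1+ρ)²/(2π√(1−ρ²)))·exp(−u²/(1+ρ))/u² as u → ∞. -/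
open MeasureTheory Filter Real Set

set_option maxHeartbeats 1000000

private lemma aux_shift (f : ℝ → ℝ) (u : ℝ) :
    ∫ x in Ioi u, f x = ∫ x in Ioi (0:ℝ), f (x + u) := by
  rw [← integral_indicator measurableSet_Ioi, ← integral_indicator measurableSet_Ioi,
    ← integral_add_right_eq_self (Set.indicator (Ioi u) f) u]
  congr 1
  ext x
  by_cases hx : 0 < x
  · simp [Set.indicator_apply, Set.mem_Ioi, hx, lt_add_iff_pos_left]
  · simp [Set.indicator_apply, Set.mem_Ioi, hx, lt_add_iff_pos_left]

private lemma aux_int_exp {c : ℝ} (hc : 0 < c) :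
    ∫ x in Ioi (0:ℝ), Real.exp (-(c * x)) = 1 / c := by
  have h := Real.integral_rpow_mul_exp_neg_mul_Ioi (a := 1) one_pos hc
  simpa using h

private lemma aux_int_sq {c : ℝ} (hc : 0 < c) :
    ∫ x in Ioi (0:ℝ), x ^ 2 * Real.exp (-(c * x)) = 2 / c ^ 3 := by
  have h := Real.integral_rpow_mul_exp_neg_mul_Ioi (a := 3) (by norm_num) hc
  rw [show ((3:ℝ) - 1) = ((2:ℕ) : ℝ) by norm_num] at h
  simp only [Real.rpow_natCast] at h
  rw [show (3:ℝ) = ((2:ℕ) : ℝ) + 1 by norm_num, Real.Gamma_nat_eq_factorial,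
    show ((1:ℝ)/c) ^ (((2:ℕ):ℝ) + 1) = (1/c)^(3:ℕ) by
      rw [show (((2:ℕ):ℝ) + 1) = ((3:ℕ):ℝ) by norm_num, Real.rpow_natCast]] at h
  rw [h]
  have : c ≠ 0 := ne_of_gt hc
  field_simp
  norm_num [Nat.factorial]

private lemma aux_intg_exp {c : ℝ} (hc : 0 < c) :
    IntegrableOn (fun x : ℝ => Real.exp (-(c * x))) (Ioi (0:ℝ)) := by
  simpa [neg_mul] using exp_neg_integrableOn_Ioi 0 hc

private lemma aux_intg_sq {c : ℝ} (hc : 0 < c) :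
    IntegrableOn (fun x : ℝ => x ^ 2 * Real.exp (-(c * x))) (Ioi (0:ℝ)) := by
  have h := integrableOn_rpow_mul_exp_neg_mul_rpow (s := 2) (p := 1) (by norm_num) one_pos hc
  refine h.congr_fun (fun x hx => ?_) measurableSet_Ioi
  beta_reduce
  rw [Real.rpow_one, show (2:ℝ) = ((2:ℕ):ℝ) by norm_num, Real.rpow_natCast, neg_mul]

theorem stmt9 (ρ : ℝ) (hρ : ρ ∈ Set.Ioo (-1 : ℝ) 1) :
    Tendsto (fun u : ℝ =>
        ((2 * Real.pi * Real.sqrt (1 - ρ ^ 2))⁻¹ *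
            ∫ x in Set.Ioi u, ∫ y in Set.Ioi u,
              Real.exp (-(x ^ 2 - 2 * ρ * x * y + y ^ 2) / (2 * (1 - ρ ^ 2)))) /
          ((1 + ρ) ^ 2 / (2 * Real.pi * Real.sqrt (1 - ρ ^ 2)) *
            (Real.exp (-u ^ 2 / (1 + ρ)) / u ^ 2)))
      atTop (nhds 1) := by
  obtain ⟨h1, h2⟩ := hρ
  have hp : (0:ℝ) < 1 + ρ := by linarith
  have hs2 : (0:ℝ) < 1 - ρ ^ 2 := by nlinarith
  have hC : (0:ℝ) < 2 * Real.pi * Real.sqrt (1 - ρ ^ 2) := by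
    have h := Real.pi_pos
    have h' := Real.sqrt_pos.2 hs2
    positivity
  set k : ℝ := (1 - ρ ^ 2)⁻¹ with hkdef
  have hk0 : 0 < k := inv_pos.2 hs2
  have key : ∀ u : ℝ, 1 ≤ u →
      1 - 4 * k * (1 + ρ) ^ 2 / u ^ 2 ≤
        ((2 * Real.pi * Real.sqrt (1 - ρ ^ 2))⁻¹ *
            ∫ x in Set.Ioi u, ∫ y in Set.Ioi u,
              Real.exp (-(x ^ 2 - 2 * ρ * x * y + y ^ 2) / (2 * (1 - ρ ^ 2)))) /
          ((1 + ρ) ^ 2 / (2 * Real.pi * Real.sqrt (1 - ρ ^ 2)) *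
            (Real.exp (-u ^ 2 / (1 + ρ)) / u ^ 2)) ∧
        ((2 * Real.pi * Real.sqrt (1 - ρ ^ 2))⁻¹ *
            ∫ x in Set.Ioi u, ∫ y in Set.Ioi u,
              Real.exp (-(x ^ 2 - 2 * ρ * x * y + y ^ 2) / (2 * (1 - ρ ^ 2)))) /
          ((1 + ρ) ^ 2 / (2 * Real.pi * Real.sqrt (1 - ρ ^ 2)) *
            (Real.exp (-u ^ 2 / (1 + ρ)) / u ^ 2)) ≤ 1 := by
    intro u hu
    have hu0 : (0:ℝ) < u := lt_of_lt_of_le one_pos hu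
    set c : ℝ := u / (1 + ρ) with hcdef
    have hc : 0 < c := div_pos hu0 hp
    set g : ℝ → ℝ := fun x => Real.exp (-(c * x)) with hgdef
    set q : ℝ → ℝ → ℝ := fun s t =>
      Real.exp (-(s ^ 2 - 2 * ρ * s * t + t ^ 2) / (2 * (1 - ρ ^ 2))) with hqdef
    have hg_pos : ∀ x, 0 < g x := fun x => Real.exp_pos _
    have hq_pos : ∀ s t, 0 < q s t := fun s t => Real.exp_pos _
    have hq_le_one : ∀ s t, q s t ≤ 1 := by
      intro s t
      have hnum : 0 ≤ s ^ 2 - 2 * ρ * s * t + t ^ 2 := by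
        nlinarith [sq_nonneg (s - ρ * t), mul_nonneg hs2.le (sq_nonneg t)]
      exact Real.exp_le_one_iff.2
        (div_nonpos_of_nonpos_of_nonneg (by linarith) (by linarith))
    have hIg : IntegrableOn g (Ioi (0:ℝ)) := aux_intg_exp hc
    have hIsq : IntegrableOn (fun x : ℝ => x ^ 2 * g x) (Ioi (0:ℝ)) := aux_intg_sq hc
    have hint_g : ∫ x in Ioi (0:ℝ), g x = 1 / c := aux_int_exp hc
    have hint_sq : ∫ x in Ioi (0:ℝ), x ^ 2 * g x = 2 / c ^ 3 := aux_int_sq hc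
    set S : Set (ℝ × ℝ) := (Ioi (0:ℝ)) ×ˢ (Ioi (0:ℝ)) with hSdef
    have hSmeas : MeasurableSet S := measurableSet_Ioi.prod measurableSet_Ioi
    have hG_int : IntegrableOn (fun z : ℝ × ℝ => g z.1 * g z.2) S (volume.prod volume) := by
      rw [IntegrableOn, hSdef, ← Measure.prod_restrict]
      exact hIg.mul_prod hIg
    set H : ℝ × ℝ → ℝ := fun z => g z.1 * g z.2 * q z.1 z.2 with hHdef
    have hH_cont : Continuous H := by
      rw [hHdef, hgdef, hqdef]
      fun_prop
    have hH_int : IntegrableOn H S (volume.prod volume) := by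
      refine Integrable.mono' hG_int (hH_cont.aestronglyMeasurable.restrict) ?_
      filter_upwards with z
      have h1 : 0 < g z.1 * g z.2 := mul_pos (hg_pos _) (hg_pos _)
      rw [Real.norm_eq_abs, abs_of_nonneg (by positivity)]
      exact mul_le_of_le_one_right h1.le (hq_le_one _ _)
    have hP_eq : (∫ z in S, H z ∂(volume.prod volume)) =
        ∫ s in Ioi (0:ℝ), ∫ t in Ioi (0:ℝ), g s * g t * q s t := by
      rw [hSdef] at hH_int ⊢
      exact setIntegral_prod H hH_int
    -- upper bound
    have hGval : (∫ z in S, g z.1 * g z.2 ∂(volume.prod volume)) = (1/c) * (1/c) := by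
      rw [hSdef, setIntegral_prod_mul, hint_g]
    have hub : (∫ z in S, H z ∂(volume.prod volume)) ≤ 1 / c ^ 2 := by
      have hmono : (∫ z in S, H z ∂(volume.prod volume)) ≤
          ∫ z in S, g z.1 * g z.2 ∂(volume.prod volume) := by
        refine setIntegral_mono_on hH_int hG_int hSmeas (fun z hz => ?_)
        exact mul_le_of_le_one_right (mul_pos (hg_pos _) (hg_pos _)).le (hq_le_one _ _)
      rw [hGval] at hmono
      calc (∫ z in S, H z ∂(volume.prod volume)) ≤ (1/c) * (1/c) := hmono
        _ = 1 / c ^ 2 := by ring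
    -- lower bound
    set L : ℝ × ℝ → ℝ := fun z =>
      g z.1 * g z.2 - (k * (z.1 ^ 2 * g z.1)) * g z.2 - g z.1 * (k * (z.2 ^ 2 * g z.2))
      with hLdef
    have hL1_int : IntegrableOn (fun z : ℝ × ℝ => (k * (z.1 ^ 2 * g z.1)) * g z.2) S
        (volume.prod volume) := by
      rw [IntegrableOn, hSdef, ← Measure.prod_restrict]
      exact Integrable.mul_prod (by simpa [mul_assoc] using hIsq.const_mul k) hIg
    have hL2_int : IntegrableOn (fun z : ℝ × ℝ => g z.1 * (k * (z.2 ^ 2 * g z.2))) S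
        (volume.prod volume) := by
      rw [IntegrableOn, hSdef, ← Measure.prod_restrict]
      exact Integrable.mul_prod hIg (by simpa [mul_assoc] using hIsq.const_mul k)
    have hL_int : IntegrableOn L S (volume.prod volume) := by
      rw [hLdef]
      exact (hG_int.sub hL1_int).sub hL2_int
    have hLle : ∀ z ∈ S, L z ≤ H z := by
      rintro ⟨s, t⟩ hz
      rw [hSdef] at hz
      obtain ⟨hzs, hzt⟩ := hz
      rw [Set.mem_Ioi] at hzs hzt
      have hw : (s ^ 2 - 2 * ρ * s * t + t ^ 2) / (2 * (1 - ρ ^ 2)) ≤ k * (s ^ 2 + t ^ 2) := by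
        have hkm : k * (s ^ 2 + t ^ 2) = (s ^ 2 + t ^ 2) / (1 - ρ ^ 2) := by
          rw [hkdef]; field_simp
        rw [hkm, div_le_div_iff₀ (by linarith) hs2]
        nlinarith [mul_nonneg (mul_nonneg hp.le (mul_pos hzs hzt).le) hs2.le,
          mul_nonneg (sq_nonneg (s - t)) hs2.le]
      have hq_lb : 1 - (s ^ 2 - 2 * ρ * s * t + t ^ 2) / (2 * (1 - ρ ^ 2)) ≤ q s t := by
        have h := Real.add_one_le_exp (-((s ^ 2 - 2 * ρ * s * t + t ^ 2) / (2 * (1 - ρ ^ 2))))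
        rw [hqdef]
        simp only [neg_div]
        linarith
      have hfac : 0 ≤ q s t - 1 + k * (s ^ 2 + t ^ 2) := by linarith
      have hpos := mul_pos (hg_pos s) (hg_pos t)
      have hkey := mul_nonneg hpos.le hfac
      simp only [hLdef, hHdef]
      nlinarith [hkey]
    have hLval : (∫ z in S, L z ∂(volume.prod volume)) = 1 / c ^ 2 - 4 * k / c ^ 4 := by
      rw [hSdef] at hG_int hL1_int hL2_int
      have hA : Integrable (fun z : ℝ × ℝ => g z.1 * g z.2 - k * (z.1 ^ 2 * g z.1) * g z.2)
          ((volume.prod volume).restrict ((Ioi (0:ℝ)) ×ˢ (Ioi (0:ℝ)))) := hG_int.sub hL1_int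
      rw [hLdef, hSdef]
      rw [integral_sub hA hL2_int, integral_sub hG_int hL1_int,
        setIntegral_prod_mul g g, setIntegral_prod_mul (fun x : ℝ => k * (x ^ 2 * g x)) g,
        setIntegral_prod_mul g (fun y : ℝ => k * (y ^ 2 * g y)), integral_const_mul,
        hint_g, hint_sq]
      have : c ≠ 0 := ne_of_gt hc
      field_simp
      ring
    have hlb : 1 / c ^ 2 - 4 * k / c ^ 4 ≤ ∫ z in S, H z ∂(volume.prod volume) := by
      have hmono := setIntegral_mono_on hL_int hH_int hSmeas hLle
      linarith [hmono, hLval.ge, hLval.le]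
    -- rewrite the double integral
    have harg : ∀ s t : ℝ,
        (-((s + u) ^ 2 - 2 * ρ * (s + u) * (t + u) + (t + u) ^ 2) / (2 * (1 - ρ ^ 2))) =
          (-u ^ 2 / (1 + ρ)) + (-(c * s) + (-(c * t) +
            (-(s ^ 2 - 2 * ρ * s * t + t ^ 2) / (2 * (1 - ρ ^ 2))))) := by
      intro s t
      rw [hcdef]
      field_simp
      ring
    have hexp : ∀ s t : ℝ,
        Real.exp (-((s + u) ^ 2 - 2 * ρ * (s + u) * (t + u) + (t + u) ^ 2) / (2 * (1 - ρ ^ 2))) =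
          Real.exp (-u ^ 2 / (1 + ρ)) * (g s * g t * q s t) := by
      intro s t
      rw [hgdef, hqdef]
      simp only [← Real.exp_add]
      rw [harg s t]
      ring_nf
    have hI_eq : (∫ x in Set.Ioi u, ∫ y in Set.Ioi u,
        Real.exp (-(x ^ 2 - 2 * ρ * x * y + y ^ 2) / (2 * (1 - ρ ^ 2)))) =
        Real.exp (-u ^ 2 / (1 + ρ)) *
          ∫ s in Ioi (0:ℝ), ∫ t in Ioi (0:ℝ), g s * g t * q s t := by
      rw [aux_shift (fun x => ∫ y in Set.Ioi u,
        Real.exp (-(x ^ 2 - 2 * ρ * x * y + y ^ 2) / (2 * (1 - ρ ^ 2)))) u]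
      rw [← integral_const_mul]
      refine setIntegral_congr_fun measurableSet_Ioi (fun s _ => ?_)
      rw [aux_shift (fun y =>
        Real.exp (-((s + u) ^ 2 - 2 * ρ * (s + u) * y + y ^ 2) / (2 * (1 - ρ ^ 2)))) u]
      rw [← integral_const_mul]
      refine setIntegral_congr_fun measurableSet_Ioi (fun t _ => ?_)
      exact hexp s t
    -- express ratio
    have hE : (0:ℝ) < Real.exp (-u ^ 2 / (1 + ρ)) := Real.exp_pos _
    set P : ℝ := ∫ z in S, H z ∂(volume.prod volume) with hPdef
    have hR : ((2 * Real.pi * Real.sqrt (1 - ρ ^ 2))⁻¹ *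
            ∫ x in Set.Ioi u, ∫ y in Set.Ioi u,
              Real.exp (-(x ^ 2 - 2 * ρ * x * y + y ^ 2) / (2 * (1 - ρ ^ 2)))) /
          ((1 + ρ) ^ 2 / (2 * Real.pi * Real.sqrt (1 - ρ ^ 2)) *
            (Real.exp (-u ^ 2 / (1 + ρ)) / u ^ 2)) = P * u ^ 2 / (1 + ρ) ^ 2 := by
      rw [hI_eq, ← hP_eq]
      rw [div_eq_iff (by positivity)]
      field_simp
    rw [hR]
    have hc2 : 1 / c ^ 2 = (1 + ρ) ^ 2 / u ^ 2 := by
      rw [hcdef]; field_simp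
    constructor
    · have : (1 / c ^ 2 - 4 * k / c ^ 4) * u ^ 2 / (1 + ρ) ^ 2 =
          1 - 4 * k * (1 + ρ) ^ 2 / u ^ 2 := by
        rw [hcdef]
        field_simp
      rw [← this]
      gcongr
    · have : (1 / c ^ 2) * u ^ 2 / (1 + ρ) ^ 2 = 1 := by
        rw [hcdef]; field_simp
      calc P * u ^ 2 / (1 + ρ) ^ 2 ≤ (1 / c ^ 2) * u ^ 2 / (1 + ρ) ^ 2 := by gcongr
        _ = 1 := this
  have hlow : Tendsto (fun u : ℝ => 1 - 4 * k * (1 + ρ) ^ 2 / u ^ 2) atTop (nhds 1) := by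
    have h0 : Tendsto (fun u : ℝ => 4 * k * (1 + ρ) ^ 2 / u ^ 2) atTop (nhds 0) :=
      Tendsto.div_atTop tendsto_const_nhds (tendsto_pow_atTop two_ne_zero)
    simpa using tendsto_const_nhds.sub h0
  refine tendsto_of_tendsto_of_tendsto_of_le_of_le' hlow tendsto_const_nhds ?_ ?_
  · filter_upwards [eventually_ge_atTop (1:ℝ)] with u hu using (key u hu).1
  · filter_upwards [eventually_ge_atTop (1:ℝ)] with u hu using (key u hu).2
end

section
/- Let U, V be uniform on [0,1] with joint CDF given by a copula C. Then for v̄ ∈ (0,1), the covariance of U and V conditioned on V ≥ v̄ equals (1/(1−v̄))·∫_{v̄}^1∫_0^1 C(u,v) du dv − (1/2)·∫_0^1 C(u,v̄) du − 1/4. -/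
open MeasureTheory ProbabilityTheory Filter Real Set

theorem stmt14 {Ω : Type*} [MeasurableSpace Ω] (P : Measure Ω) [IsProbabilityMeasure P]
    (U V : Ω → ℝ) (hU : Measurable U) (hV : Measurable V)
    (hUuni : Measure.map U P = volume.restrict (Set.Icc (0 : ℝ) 1))
    (hVuni : Measure.map V P = volume.restrict (Set.Icc (0 : ℝ) 1))
    (C : ℝ → ℝ → ℝ)
    (hC : ∀ u ∈ Set.Icc (0 : ℝ) 1, ∀ v ∈ Set.Icc (0 : ℝ) 1,
      (P {ω | U ω ≤ u ∧ V ω ≤ v}).toReal = C u v)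
    (vb : ℝ) (hvb : vb ∈ Set.Ioo (0 : ℝ) 1) :
    cCov P {ω | vb ≤ V ω} U V
      = (1 / (1 - vb)) * (∫ v in Set.Ioc vb 1, ∫ u in Set.Ioc (0 : ℝ) 1, C u v)
        - (1 / 2) * (∫ u in Set.Ioc (0 : ℝ) 1, C u vb) - 1 / 4 := by
  obtain ⟨hvb0, hvb1⟩ := hvb
  -- marginals
  have marg : ∀ (W : Ω → ℝ), Measurable W → Measure.map W P = volume.restrict (Set.Icc (0:ℝ) 1) →
      ∀ x ∈ Set.Icc (0:ℝ) 1, P {ω | W ω ≤ x} = ENNReal.ofReal x := by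
    intro W hW hWuni x hx
    have h1 : {ω | W ω ≤ x} = W ⁻¹' (Set.Iic x) := rfl
    rw [h1, ← Measure.map_apply hW measurableSet_Iic, hWuni,
      Measure.restrict_apply measurableSet_Iic]
    have h2 : Set.Iic x ∩ Set.Icc 0 1 = Set.Icc 0 x := by
      ext y; simp only [mem_inter_iff, mem_Iic, mem_Icc]
      exact ⟨fun ⟨h1, h2, h3⟩ => ⟨h2, h1⟩, fun ⟨h1, h2⟩ => ⟨h2, h1, h2.trans hx.2⟩⟩
    rw [h2, Real.volume_Icc]; norm_num
  have hVlt : P {ω | V ω < vb} = ENNReal.ofReal vb := by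
    have h1 : {ω | V ω < vb} = V ⁻¹' (Set.Iio vb) := rfl
    rw [h1, ← Measure.map_apply hV measurableSet_Iio, hVuni,
      Measure.restrict_apply measurableSet_Iio]
    have h2 : Set.Iio vb ∩ Set.Icc 0 1 = Set.Ico 0 vb := by
      ext y; simp only [mem_inter_iff, mem_Iio, mem_Icc, mem_Ico]
      exact ⟨fun ⟨h1, h2, h3⟩ => ⟨h2, h1⟩, fun ⟨h1, h2⟩ => ⟨h2, h1, (h2.trans hvb1).le⟩⟩
    rw [h2, Real.volume_Ico]; norm_num
  have hVatom : P {ω | V ω = vb} = 0 := by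
    have hsplit : {ω | V ω ≤ vb} = {ω | V ω < vb} ∪ {ω | V ω = vb} := by
      ext ω; simp [le_iff_lt_or_eq]
    have hdisj : Disjoint {ω | V ω < vb} {ω | V ω = vb} := by
      rw [Set.disjoint_left]; intro ω h1 h2; exact absurd h2 (ne_of_lt h1)
    have hmeas : MeasurableSet {ω | V ω = vb} := hV (measurableSet_singleton vb)
    have := measure_union (μ := P) hdisj hmeas
    rw [← hsplit, marg V hV hVuni vb ⟨hvb0.le, hvb1.le⟩, hVlt] at this
    have hne : ENNReal.ofReal vb ≠ ⊤ := ENNReal.ofReal_ne_top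
    exact (ENNReal.add_right_inj hne).mp (by rw [← this, add_zero]) |>.symm
  -- real-valued probability helpers
  have hfin : ∀ S : Set Ω, P S ≠ ⊤ := fun S => measure_ne_top P S
  have hcompl : ∀ S : Set Ω, MeasurableSet S → (P Sᶜ).toReal = 1 - (P S).toReal := by
    intro S hS
    have h := measure_add_measure_compl (μ := P) hS
    have h2 := congrArg ENNReal.toReal h
    rw [ENNReal.toReal_add (hfin S) (hfin Sᶜ)] at h2
    simp only [measure_univ, ENNReal.toReal_one] at h2
    linarith
  have hunion : ∀ S T : Set Ω, MeasurableSet T →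
      (P (S ∪ T)).toReal = (P S).toReal + (P T).toReal - (P (S ∩ T)).toReal := by
    intro S T hT
    have h := measure_union_add_inter (μ := P) S hT
    have h2 := congrArg ENNReal.toReal h
    rw [ENNReal.toReal_add (hfin _) (hfin _), ENNReal.toReal_add (hfin _) (hfin _)] at h2
    linarith
  -- event A
  set A : Set Ω := {ω | vb ≤ V ω} with hAdef
  have hAm : MeasurableSet A := hV measurableSet_Ici
  have hAc : Aᶜ = {ω | V ω < vb} := by ext ω; simp [hAdef, not_le]
  have hPA : (P A).toReal = 1 - vb := by
    have := hcompl A hAm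
    rw [hAc, hVlt, ENNReal.toReal_ofReal hvb0.le] at this
    linarith
  -- inclusion-exclusion lemmas
  have q2 : ∀ u ∈ Set.Icc (0:ℝ) 1, ∀ v ∈ Set.Icc (0:ℝ) 1,
      (P {ω | u < U ω ∧ v < V ω}).toReal = 1 - u - v + C u v := by
    intro u hu v hv
    have hset : {ω | u < U ω ∧ v < V ω} = ({ω | U ω ≤ u} ∪ {ω | V ω ≤ v})ᶜ := by
      ext ω; simp [not_le, not_or]
    have hinter : {ω | U ω ≤ u} ∩ {ω | V ω ≤ v} = {ω | U ω ≤ u ∧ V ω ≤ v} := rfl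
    rw [hset, hcompl ({ω | U ω ≤ u} ∪ {ω | V ω ≤ v}) ((hU measurableSet_Iic).union (hV measurableSet_Iic)),
      hunion {ω | U ω ≤ u} {ω | V ω ≤ v} (hV measurableSet_Iic), hinter, hC u hu v hv,
      marg U hU hUuni u hu, marg V hV hVuni v hv,
      ENNReal.toReal_ofReal hu.1, ENNReal.toReal_ofReal hv.1]
    ring
  have q1 : ∀ u ∈ Set.Icc (0:ℝ) 1,
      (P {ω | vb ≤ V ω ∧ u < U ω}).toReal = 1 - u - vb + C u vb := by
    intro u hu
    have hset : {ω | vb ≤ V ω ∧ u < U ω} = ({ω | U ω ≤ u} ∪ {ω | V ω < vb})ᶜ := by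
      ext ω; simp only [mem_setOf_eq, Set.mem_compl_iff, Set.mem_union, not_or, not_le, not_lt]
      tauto
    have hlt_le : P ({ω | U ω ≤ u} ∩ {ω | V ω < vb}) = P {ω | U ω ≤ u ∧ V ω ≤ vb} := by
      apply le_antisymm
      · exact measure_mono (fun ω ⟨h1, h2⟩ => ⟨h1, h2.le⟩)
      · calc P {ω | U ω ≤ u ∧ V ω ≤ vb}
            ≤ P (({ω | U ω ≤ u} ∩ {ω | V ω < vb}) ∪ {ω | V ω = vb}) := by
              apply measure_mono
              rintro ω ⟨h1, h2⟩
              rcases lt_or_eq_of_le h2 with h | h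
              · exact Or.inl ⟨h1, h⟩
              · exact Or.inr h
          _ ≤ P ({ω | U ω ≤ u} ∩ {ω | V ω < vb}) + P {ω | V ω = vb} := measure_union_le _ _
          _ = P ({ω | U ω ≤ u} ∩ {ω | V ω < vb}) := by rw [hVatom, add_zero]
    rw [hset, hcompl ({ω | U ω ≤ u} ∪ {ω | V ω < vb}) ((hU measurableSet_Iic).union (hV measurableSet_Iio)),
      hunion {ω | U ω ≤ u} {ω | V ω < vb} (hV measurableSet_Iio), hlt_le, hC u hu vb ⟨hvb0.le, hvb1.le⟩,
      marg U hU hUuni u hu, hVlt, ENNReal.toReal_ofReal hu.1, ENNReal.toReal_ofReal hvb0.le]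
    ring
  -- a.e. range
  have hrange : ∀ (W : Ω → ℝ), Measurable W → Measure.map W P = volume.restrict (Set.Icc (0:ℝ) 1) →
      ∀ᵐ ω ∂P, W ω ∈ Set.Icc (0:ℝ) 1 := by
    intro W hW hWuni
    have h0 : P (W ⁻¹' (Set.Icc (0:ℝ) 1)ᶜ) = 0 := by
      rw [← Measure.map_apply hW measurableSet_Icc.compl, hWuni,
        Measure.restrict_apply measurableSet_Icc.compl]
      simp
    rw [ae_iff]
    exact h0
  have hU01 := hrange U hU hUuni
  have hV01 := hrange V hV hVuni
  -- the reference measure on [0,1]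
  set ν : Measure ℝ := volume.restrict (Set.Ioc (0:ℝ) 1) with hνdef
  haveI hνfin : IsFiniteMeasure ν := by
    constructor
    rw [hνdef, Measure.restrict_apply_univ, Real.volume_Ioc]
    exact ENNReal.ofReal_lt_top
  have hνIio : ∀ x ∈ Set.Icc (0:ℝ) 1, (ν (Set.Iio x)).toReal = x := by
    intro x hx
    rw [hνdef, Measure.restrict_apply measurableSet_Iio]
    have h2 : Set.Iio x ∩ Set.Ioc 0 1 = Set.Ioo 0 x := by
      ext y; simp only [mem_inter_iff, mem_Iio, mem_Ioc, mem_Ioo]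
      exact ⟨fun ⟨h1, h2, h3⟩ => ⟨h2, h1⟩, fun ⟨h1, h2⟩ => ⟨h2, h1, (h2.trans_le hx.2).le⟩⟩
    rw [h2, Real.volume_Ioo, ENNReal.toReal_ofReal (by linarith [hx.1])]
    ring
  -- E2
  have hE2 : ∫ ω in A, V ω ∂P = (1 - vb^2)/2 := by
    have h1 : ∫ y in Set.Ici vb, y ∂(Measure.map V P) = ∫ ω in A, V ω ∂P :=
      setIntegral_map (f := fun y => y) measurableSet_Ici
        measurable_id.aestronglyMeasurable hV.aemeasurable
    rw [← h1, hVuni, Measure.restrict_restrict measurableSet_Ici]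
    have h2 : Set.Ici vb ∩ Set.Icc 0 1 = Set.Icc vb 1 := by
      ext y; simp only [mem_inter_iff, mem_Ici, mem_Icc]
      exact ⟨fun ⟨h1, h2, h3⟩ => ⟨h1, h3⟩, fun ⟨h1, h2⟩ => ⟨h1, hvb0.le.trans h1, h2⟩⟩
    rw [h2, integral_Icc_eq_integral_Ioc, ← intervalIntegral.integral_of_le hvb1.le,
      integral_id]
    ring
  -- E1 via Fubini
  set G₁ : ℝ → ℝ := fun u => (P {ω | vb ≤ V ω ∧ u < U ω}).toReal with hG1def
  have hs₁ : MeasurableSet {p : Ω × ℝ | vb ≤ V p.1 ∧ p.2 < U p.1} :=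
    ((hV.comp measurable_fst) measurableSet_Ici).inter
      (measurableSet_lt measurable_snd (hU.comp measurable_fst))
  set F₁ : Ω × ℝ → ℝ := ({p : Ω × ℝ | vb ≤ V p.1 ∧ p.2 < U p.1}).indicator
    (fun _ => (1:ℝ)) with hF1def
  have hF₁int : Integrable F₁ (P.prod ν) := (integrable_const (1:ℝ)).indicator hs₁
  have hswap : ∫ ω, (∫ u, F₁ (ω, u) ∂ν) ∂P = ∫ u, (∫ ω, F₁ (ω, u) ∂P) ∂ν :=
    integral_integral_swap hF₁int
  have hinner : ∀ᵐ ω ∂P, (∫ u, F₁ (ω, u) ∂ν) = A.indicator U ω := by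
    filter_upwards [hU01] with ω hUω
    by_cases hA : vb ≤ V ω
    · have h1 : (fun u => F₁ (ω, u)) = (Set.Iio (U ω)).indicator (fun _ => (1:ℝ)) := by
        ext u
        simp only [hF1def, Set.indicator_apply, mem_setOf_eq, mem_Iio]
        by_cases h : u < U ω <;> simp [h, hA]
      calc ∫ u, F₁ (ω, u) ∂ν = ∫ u, (Set.Iio (U ω)).indicator (fun _ => (1:ℝ)) u ∂ν := by
            rw [h1]
        _ = (ν (Set.Iio (U ω))).toReal := integral_indicator_one measurableSet_Iio
        _ = U ω := hνIio _ hUω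
        _ = A.indicator U ω := (Set.indicator_of_mem (show ω ∈ A from hA) U).symm
    · have h1 : (fun u => F₁ (ω, u)) = fun _ => (0:ℝ) := by
        ext u
        simp [hF1def, Set.indicator_apply, hA]
      rw [h1, integral_zero, Set.indicator_of_notMem (show ω ∉ A from hA)]
  have hE1' : ∫ ω in A, U ω ∂P = ∫ u, G₁ u ∂ν := by
    rw [← integral_indicator hAm, ← integral_congr_ae hinner, hswap]
    refine integral_congr_ae (ae_of_all _ fun u => ?_)
    show ∫ ω, F₁ (ω, u) ∂P = G₁ u
    have h1 : (fun ω => F₁ (ω, u)) = ({ω | vb ≤ V ω ∧ u < U ω}).indicator (fun _ => (1:ℝ)) := by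
      ext ω; simp [hF1def, Set.indicator_apply]
    rw [h1]
    exact integral_indicator_one (hAm.inter (hU measurableSet_Ioi))
  have hG1anti : Antitone G₁ := by
    intro a b hab
    apply ENNReal.toReal_mono (hfin _)
    exact measure_mono (fun ω ⟨h1, h2⟩ => ⟨h1, hab.trans_lt h2⟩)
  have hG1nonneg : ∀ u, 0 ≤ G₁ u := fun u => ENNReal.toReal_nonneg
  have hG1le : ∀ u, G₁ u ≤ 1 := by
    intro u
    have h := prob_le_one (μ := P) (s := {ω | vb ≤ V ω ∧ u < U ω})
    have := ENNReal.toReal_mono ENNReal.one_ne_top h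
    simpa using this
  have hG1int : Integrable G₁ ν :=
    (integrable_const (1:ℝ)).mono' hG1anti.measurable.aestronglyMeasurable
      (ae_of_all _ fun u => by rw [Real.norm_of_nonneg (hG1nonneg u)]; exact hG1le u)
  have hlin : ∀ a b : ℝ, Integrable (fun u : ℝ => a + b * u) ν := by
    intro a b
    rw [hνdef]
    exact (continuous_const.add (continuous_const.mul continuous_id)).integrableOn_Ioc
  have hG1eq : ∀ u ∈ Set.Ioc (0:ℝ) 1, G₁ u = 1 - u - vb + C u vb := by
    intro u hu
    exact q1 u ⟨hu.1.le, hu.2⟩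
  have hCvbint : Integrable (fun u => C u vb) ν := by
    apply (hG1int.sub (hlin (1 - vb) (-1))).congr
    rw [hνdef]
    refine (ae_restrict_iff' measurableSet_Ioc).2 (ae_of_all _ fun u hu => ?_)
    simp only [Pi.sub_apply]
    rw [hG1eq u hu]; ring
  have hlinval : ∫ u, ((1 - vb) + (-1) * u) ∂ν = 1/2 - vb := by
    rw [hνdef, ← intervalIntegral.integral_of_le zero_le_one,
      intervalIntegral.integral_add (intervalIntegrable_const)
        ((intervalIntegral.intervalIntegrable_id).const_mul (-1)),
      intervalIntegral.integral_const, intervalIntegral.integral_const_mul, integral_id]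
    norm_num
    ring
  have hIval : ∫ u, G₁ u ∂ν = 1/2 - vb + ∫ u, C u vb ∂ν := by
    have h1 : ∫ u, G₁ u ∂ν = ∫ u, (((1 - vb) + (-1) * u) + C u vb) ∂ν := by
      apply integral_congr_ae
      rw [hνdef]
      refine (ae_restrict_iff' measurableSet_Ioc).2 (ae_of_all _ fun u hu => ?_)
      rw [hG1eq u hu]; ring
    rw [h1, integral_add (hlin (1 - vb) (-1)) hCvbint, hlinval]
  have hE1 : ∫ ω in A, U ω ∂P = 1/2 - vb + ∫ u, C u vb ∂ν := hE1'.trans hIval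
  have hPle1 : ∀ S : Set Ω, (P S).toReal ≤ 1 := by
    intro S
    have h := prob_le_one (μ := P) (s := S)
    simpa using ENNReal.toReal_mono ENNReal.one_ne_top h
  -- general linear integral value
  have hlinval' : ∀ a : ℝ, ∫ u, (a + (-1) * u) ∂ν = a - 1/2 := by
    intro a
    rw [hνdef, ← intervalIntegral.integral_of_le zero_le_one,
      intervalIntegral.integral_add (intervalIntegrable_const)
        ((intervalIntegral.intervalIntegrable_id).const_mul (-1)),
      intervalIntegral.integral_const, intervalIntegral.integral_const_mul, integral_id]
    norm_num
    ring
  -- E3 via double Fubini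
  set G₃ : ℝ × ℝ → ℝ := fun q => (P {ω | vb ≤ V ω ∧ q.1 < V ω ∧ q.2 < U ω}).toReal with hG3def
  have hs₃' : MeasurableSet {q : (ℝ × ℝ) × Ω | vb ≤ V q.2 ∧ q.1.1 < V q.2 ∧ q.1.2 < U q.2} := by
    refine MeasurableSet.inter ?_ (MeasurableSet.inter ?_ ?_)
    · exact (hV.comp measurable_snd) measurableSet_Ici
    · exact measurableSet_lt (measurable_fst.fst) (hV.comp measurable_snd)
    · exact measurableSet_lt (measurable_fst.snd) (hU.comp measurable_snd)
  have hG3meas : Measurable G₃ := by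
    have h := measurable_measure_prodMk_left (ν := P) hs₃'
    exact h.ennreal_toReal
  have hs₃ : MeasurableSet {p : Ω × (ℝ × ℝ) | vb ≤ V p.1 ∧ p.2.1 < V p.1 ∧ p.2.2 < U p.1} := by
    refine MeasurableSet.inter ?_ (MeasurableSet.inter ?_ ?_)
    · exact (hV.comp measurable_fst) measurableSet_Ici
    · exact measurableSet_lt (measurable_snd.fst) (hV.comp measurable_fst)
    · exact measurableSet_lt (measurable_snd.snd) (hU.comp measurable_fst)
  set F₃ : Ω × (ℝ × ℝ) → ℝ := ({p : Ω × (ℝ × ℝ) | vb ≤ V p.1 ∧ p.2.1 < V p.1 ∧ p.2.2 < U p.1}).indicator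
    (fun _ => (1:ℝ)) with hF3def
  have hF₃int : Integrable F₃ (P.prod (ν.prod ν)) := (integrable_const (1:ℝ)).indicator hs₃
  have hswap3 : ∫ ω, (∫ q, F₃ (ω, q) ∂(ν.prod ν)) ∂P = ∫ q, (∫ ω, F₃ (ω, q) ∂P) ∂(ν.prod ν) :=
    integral_integral_swap hF₃int
  have hinner3 : ∀ᵐ ω ∂P, (∫ q, F₃ (ω, q) ∂(ν.prod ν)) = A.indicator (fun ω => V ω * U ω) ω := by
    filter_upwards [hU01, hV01] with ω hUω hVω
    by_cases hA : vb ≤ V ω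
    · have h1 : (fun q : ℝ × ℝ => F₃ (ω, q))
          = (Set.Iio (V ω) ×ˢ Set.Iio (U ω)).indicator (fun _ => (1:ℝ)) := by
        ext q
        simp only [hF3def, Set.indicator_apply, mem_setOf_eq, Set.mem_prod, mem_Iio]
        by_cases h1 : q.1 < V ω <;> by_cases h2 : q.2 < U ω <;> simp [h1, h2, hA]
      calc ∫ q, F₃ (ω, q) ∂(ν.prod ν)
          = ∫ q, (Set.Iio (V ω) ×ˢ Set.Iio (U ω)).indicator (fun _ => (1:ℝ)) q ∂(ν.prod ν) := by
            rw [h1]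
        _ = ((ν.prod ν) (Set.Iio (V ω) ×ˢ Set.Iio (U ω))).toReal :=
            integral_indicator_one (measurableSet_Iio.prod measurableSet_Iio)
        _ = (ν (Set.Iio (V ω)) * ν (Set.Iio (U ω))).toReal := by rw [Measure.prod_prod]
        _ = V ω * U ω := by rw [ENNReal.toReal_mul, hνIio _ hVω, hνIio _ hUω]
        _ = A.indicator (fun ω => V ω * U ω) ω :=
            (Set.indicator_of_mem (show ω ∈ A from hA) (fun ω => V ω * U ω)).symm
    · have h1 : (fun q : ℝ × ℝ => F₃ (ω, q)) = fun _ => (0:ℝ) := by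
        ext q
        simp [hF3def, Set.indicator_apply, hA]
      rw [h1, integral_zero, Set.indicator_of_notMem (show ω ∉ A from hA)]
  have hE3' : ∫ ω in A, V ω * U ω ∂P = ∫ q, G₃ q ∂(ν.prod ν) := by
    rw [← integral_indicator hAm, ← integral_congr_ae hinner3, hswap3]
    refine integral_congr_ae (ae_of_all _ fun q => ?_)
    show ∫ ω, F₃ (ω, q) ∂P = G₃ q
    have h1 : (fun ω => F₃ (ω, q))
        = ({ω | vb ≤ V ω ∧ q.1 < V ω ∧ q.2 < U ω}).indicator (fun _ => (1:ℝ)) := by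
      ext ω; simp [hF3def, Set.indicator_apply]
    rw [h1]
    exact integral_indicator_one
      (hAm.inter ((hV measurableSet_Ioi).inter (hU measurableSet_Ioi)))
  have hG3int : Integrable G₃ (ν.prod ν) :=
    (integrable_const (1:ℝ)).mono' hG3meas.aestronglyMeasurable
      (ae_of_all _ fun q => by
        rw [Real.norm_of_nonneg ENNReal.toReal_nonneg]; exact hPle1 _)
  have hprod : ∫ q, G₃ q ∂(ν.prod ν) = ∫ v, ∫ u, G₃ (v, u) ∂ν ∂ν :=
    integral_prod _ hG3int
  set H : ℝ → ℝ := fun v => ∫ u, G₃ (v, u) ∂ν with hHdef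
  have hHint : Integrable H ν := hG3int.integral_prod_left
  -- low part : v ∈ Ioc 0 vb
  have hG3eqlow : ∀ v ∈ Set.Ioc (0:ℝ) vb, ∀ u : ℝ, G₃ (v, u) = G₁ u := by
    intro v hv u
    have hP2 : P {ω | vb ≤ V ω ∧ u < U ω} = P {ω | vb ≤ V ω ∧ v < V ω ∧ u < U ω} := by
      apply le_antisymm
      · calc P {ω | vb ≤ V ω ∧ u < U ω}
            ≤ P ({ω | vb ≤ V ω ∧ v < V ω ∧ u < U ω} ∪ {ω | V ω = vb}) := by
              apply measure_mono
              rintro ω ⟨h1, h2⟩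
              rcases lt_or_ge v (V ω) with h | h
              · exact Or.inl ⟨h1, h, h2⟩
              · exact Or.inr (show V ω = vb from le_antisymm (h.trans hv.2) h1)
          _ ≤ P {ω | vb ≤ V ω ∧ v < V ω ∧ u < U ω} + P {ω | V ω = vb} := measure_union_le _ _
          _ = P {ω | vb ≤ V ω ∧ v < V ω ∧ u < U ω} := by rw [hVatom, add_zero]
      · exact measure_mono (fun ω ⟨h1, h2, h3⟩ => ⟨h1, h3⟩)
    exact congrArg ENNReal.toReal hP2.symm
  have hlow : ∫ v in Set.Ioc (0:ℝ) vb, H v = vb * (∫ u, G₁ u ∂ν) := by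
    rw [setIntegral_congr_fun measurableSet_Ioc
      (fun v hv => integral_congr_ae (ae_of_all _ (hG3eqlow v hv)) :
        Set.EqOn H (fun _ => ∫ u, G₁ u ∂ν) (Set.Ioc 0 vb))]
    rw [setIntegral_const, measureReal_def, Real.volume_Ioc, smul_eq_mul,
      ENNReal.toReal_ofReal (by linarith)]
    ring_nf
  -- high part : v ∈ Ioc vb 1
  have hG3eqhigh : ∀ v ∈ Set.Ioc vb 1, ∀ u ∈ Set.Ioc (0:ℝ) 1, G₃ (v, u) = 1 - u - v + C u v := by
    intro v hv u hu
    have hset : {ω | vb ≤ V ω ∧ v < V ω ∧ u < U ω} = {ω | u < U ω ∧ v < V ω} := by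
      ext ω; simp only [mem_setOf_eq]
      exact ⟨fun ⟨h1, h2, h3⟩ => ⟨h3, h2⟩, fun ⟨h3, h2⟩ => ⟨hv.1.le.trans h2.le, h2, h3⟩⟩
    show (P {ω | vb ≤ V ω ∧ v < V ω ∧ u < U ω}).toReal = _
    rw [hset]
    exact q2 u ⟨hu.1.le, hu.2⟩ v ⟨(hvb0.trans hv.1).le, hv.2⟩
  have hG3vint : ∀ v : ℝ, Integrable (fun u => G₃ (v, u)) ν := by
    intro v
    exact (integrable_const (1:ℝ)).mono'
      (hG3meas.comp (measurable_prodMk_left)).aestronglyMeasurable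
      (ae_of_all _ fun u => by
        rw [Real.norm_of_nonneg ENNReal.toReal_nonneg]; exact hPle1 _)
  have hCvint : ∀ v ∈ Set.Ioc vb 1, Integrable (fun u => C u v) ν := by
    intro v hv
    apply ((hG3vint v).sub (hlin (1 - v) (-1))).congr
    rw [hνdef]
    refine (ae_restrict_iff' measurableSet_Ioc).2 (ae_of_all _ fun u hu => ?_)
    simp only [Pi.sub_apply]
    rw [hG3eqhigh v hv u hu]; ring
  have hHigh_v : ∀ v ∈ Set.Ioc vb 1, H v = (1/2 - v) + ∫ u, C u v ∂ν := by
    intro v hv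
    have h1 : H v = ∫ u, (((1 - v) + (-1) * u) + C u v) ∂ν := by
      apply integral_congr_ae
      rw [hνdef]
      refine (ae_restrict_iff' measurableSet_Ioc).2 (ae_of_all _ fun u hu => ?_)
      show G₃ (v, u) = (1 - v) + (-1) * u + C u v
      rw [hG3eqhigh v hv u hu]; ring
    rw [h1, integral_add (hlin (1 - v) (-1)) (hCvint v hv), hlinval']
    ring
  have hlin2 : IntegrableOn (fun v : ℝ => 1/2 - v) (Set.Ioc vb 1) volume :=
    (continuous_const.sub continuous_id).integrableOn_Ioc
  have hJint : IntegrableOn (fun v => ∫ u, C u v ∂ν) (Set.Ioc vb 1) volume := by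
    have h1 : IntegrableOn H (Set.Ioc vb 1) volume :=
      (show IntegrableOn H (Set.Ioc 0 1) volume from hHint).mono_set
        (Set.Ioc_subset_Ioc_left hvb0.le)
    apply IntegrableOn.congr_fun (h1.sub hlin2) _ measurableSet_Ioc
    intro v hv
    simp only [Pi.sub_apply]
    rw [hHigh_v v hv]; ring
  have hhighlin : ∫ v in Set.Ioc vb 1, (1/2 - v) = (1/2) * (1 - vb) - (1 - vb^2)/2 := by
    rw [← intervalIntegral.integral_of_le hvb1.le,
      intervalIntegral.integral_sub intervalIntegrable_const
        intervalIntegral.intervalIntegrable_id,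
      intervalIntegral.integral_const, integral_id]
    rw [smul_eq_mul]; ring
  have hhigh : ∫ v in Set.Ioc vb 1, H v
      = ((1/2) * (1 - vb) - (1 - vb^2)/2) + ∫ v in Set.Ioc vb 1, ∫ u, C u v ∂ν := by
    rw [setIntegral_congr_fun measurableSet_Ioc
      (fun v hv => hHigh_v v hv :
        Set.EqOn H (fun v => (1/2 - v) + ∫ u, C u v ∂ν) (Set.Ioc vb 1))]
    rw [integral_add hlin2 hJint, hhighlin]
  -- splitting
  have hsplitint : ∫ v, H v ∂ν = (∫ v in Set.Ioc (0:ℝ) vb, H v) + ∫ v in Set.Ioc vb 1, H v := by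
    rw [hνdef, ← Set.Ioc_union_Ioc_eq_Ioc hvb0.le hvb1.le]
    exact setIntegral_union (Set.Ioc_disjoint_Ioc_of_le le_rfl) measurableSet_Ioc
      ((show IntegrableOn H (Set.Ioc 0 1) volume from hHint).mono_set
        (Set.Ioc_subset_Ioc_right hvb1.le))
      ((show IntegrableOn H (Set.Ioc 0 1) volume from hHint).mono_set
        (Set.Ioc_subset_Ioc_left hvb0.le))
  have hE3 : ∫ ω in A, V ω * U ω ∂P
      = vb * (1/2 - vb + ∫ u, C u vb ∂ν) + ((1/2) * (1 - vb) - (1 - vb^2)/2)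
        + ∫ v in Set.Ioc vb 1, ∫ u, C u v ∂ν := by
    rw [hE3', hprod]
    have : ∫ v, H v ∂ν = ∫ v, ∫ u, G₃ (v, u) ∂ν ∂ν := rfl
    rw [← this, hsplitint, hlow, hhigh, hIval]
    ring
  -- final assembly
  have hmulcomm : ∫ ω in A, U ω * V ω ∂P = ∫ ω in A, V ω * U ω ∂P := by
    apply integral_congr_ae (ae_of_all _ fun ω => mul_comm _ _)
  rw [cCov, cExp, cExp, cExp, hmulcomm, hPA, hE2, hE1, hE3]
  have h1vb : (1:ℝ) - vb ≠ 0 := by linarith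
  field_simp
  ring
end
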